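/- arXiv:1906.09688 — 4 statements merged into one kernel-verified Lean document; each statement's English description precedes it below -/
import Mathlib

section
/- For any hypothesis g in a symmetric hypothesis space H, the equal opportunity distance in the target domain satisfies Δ_{EOp,T}(g) ≤ Δ_{EOp,S}(g) + (1/2) d_{HΔH}(D_{T_0^0}, D_{S_0^0}) + (1/2) d_{HΔH}(D_{T_1^0}, D_{S_1^0}) + λ_0^0 + λ_1^0, where λ_α^0 = ε_{S_α^0}(g*, f) + ε_{T_α^0}(g*, f) for any fixed reference hypothesis g* ∈ H. -/
open MeasureTheory

/-- Disagreement error `ε_D(h,h') = E_{z∼D}[|h z − h' z|]`. -/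
noncomputable def errE {Z : Type*} [MeasurableSpace Z] (μ : Measure Z) (h h' : Z → ℝ) : ℝ :=
  ∫ z, |h z - h' z| ∂μ

/-- `d_{HΔH}(D,D') = 2 sup_{h,h'∈H} |Pr_D[h≠h'] − Pr_{D'}[h≠h']|`. -/
noncomputable def dHH {Z : Type*} [MeasurableSpace Z] (H : Set (Z → ℝ))
    (μ ν : Measure Z) : ℝ :=
  2 * ⨆ p : H × H,
    |(μ {z | p.1.1 z ≠ p.2.1 z}).toReal - (ν {z | p.1.1 z ≠ p.2.1 z}).toReal|

/-- Equal opportunity distance `Δ_{EOp,D}(g) = |E_{D_0^0}[g] − E_{D_1^0}[g]|`. -/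
noncomputable def eopDiff {Z : Type*} [MeasurableSpace Z] (μ0 μ1 : Measure Z)
    (g : Z → ℝ) : ℝ :=
  |(∫ z, g z ∂μ0) - ∫ z, g z ∂μ1|

lemma binInt {Z : Type*} [MeasurableSpace Z] (μ : Measure Z) [IsProbabilityMeasure μ]
    (g : Z → ℝ) (hgm : Measurable g) (hgb : ∀ z, g z = 0 ∨ g z = 1) : Integrable g μ := by
  refine Integrable.mono' (integrable_const 1) hgm.aestronglyMeasurable (ae_of_all _ fun z => ?_)
  rcases hgb z with h | h <;> simp [h]

lemma disagree {Z : Type*} [MeasurableSpace Z] (μ : Measure Z) [IsProbabilityMeasure μ]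
    (g gs : Z → ℝ) (hgm : Measurable g) (hgsm : Measurable gs)
    (hgb : ∀ z, g z = 0 ∨ g z = 1) (hgsb : ∀ z, gs z = 0 ∨ gs z = 1) :
    ∫ z, |g z - gs z| ∂μ = (μ {z | g z ≠ gs z}).toReal := by
  have hs : MeasurableSet {z | g z ≠ gs z} := (measurableSet_eq_fun hgm hgsm).compl
  have heq : ∀ z, |g z - gs z| = ({z | g z ≠ gs z}).indicator (fun _ => (1:ℝ)) z := by
    intro z
    by_cases h : g z = gs z
    · simp [Set.indicator, h]
    · rcases hgb z with h1 | h1 <;> rcases hgsb z with h2 | h2 <;>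
        simp_all [Set.indicator, h1, h2]
  simp only [heq]
  rw [integral_indicator_const _ hs]
  simp
  rfl

/-- one-measure estimate: |E_μ[g] − μ{g≠gs}.toReal| ≤ ∫|gs−f|dμ -/
lemma onestep {Z : Type*} [MeasurableSpace Z] (μ : Measure Z) [IsProbabilityMeasure μ]
    (g gs f : Z → ℝ) (hgm : Measurable g) (hgsm : Measurable gs)
    (hgb : ∀ z, g z = 0 ∨ g z = 1) (hgsb : ∀ z, gs z = 0 ∨ gs z = 1)
    (hf : f =ᵐ[μ] fun _ => 0) :
    |(∫ z, g z ∂μ) - (μ {z | g z ≠ gs z}).toReal| ≤ ∫ z, |gs z - f z| ∂μ := by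
  have hig : Integrable g μ := binInt μ g hgm hgb
  have higs : Integrable (fun z => |g z - gs z|) μ :=
    ((binInt μ g hgm hgb).sub (binInt μ gs hgsm hgsb)).abs
  have higsf : Integrable (fun z => |gs z - f z|) μ := by
    refine (binInt μ gs hgsm hgsb).abs.congr (hf.mono fun z hz => ?_)
    simp [hz]
  rw [← disagree μ g gs hgm hgsm hgb hgsb, ← integral_sub hig higs]
  calc |∫ z, (g z - |g z - gs z|) ∂μ| ≤ ∫ z, abs (g z - |g z - gs z|) ∂μ := by
        simpa [Real.norm_eq_abs] using
          norm_integral_le_integral_norm (fun z => g z - |g z - gs z|) (μ := μ)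
    _ ≤ ∫ z, |gs z - f z| ∂μ := by
        refine integral_mono_ae (hig.sub higs).abs higsf (hf.mono fun z hz => ?_)
        simp only [] at hz ⊢
        rcases hgb z with h1 | h1 <;> rcases hgsb z with h2 | h2 <;>
          simp [h1, h2, hz]

theorem stmt3 {Z : Type*} [MeasurableSpace Z] (H : Set (Z → ℝ))
    (hbin : ∀ h ∈ H, ∀ z, h z = 0 ∨ h z = 1)
    (hmeas : ∀ h ∈ H, Measurable h)
    (hsym : ∀ h ∈ H, (fun z => 1 - h z) ∈ H)
    (μS0 μS1 μT0 μT1 : Measure Z)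
    [IsProbabilityMeasure μS0] [IsProbabilityMeasure μS1]
    [IsProbabilityMeasure μT0] [IsProbabilityMeasure μT1]
    (f : Z → ℝ)
    (hfS0 : f =ᵐ[μS0] fun _ => 0) (hfS1 : f =ᵐ[μS1] fun _ => 0)
    (hfT0 : f =ᵐ[μT0] fun _ => 0) (hfT1 : f =ᵐ[μT1] fun _ => 0)
    (g : Z → ℝ) (hg : g ∈ H) (gs : Z → ℝ) (hgs : gs ∈ H) :
    eopDiff μT0 μT1 g ≤
      eopDiff μS0 μS1 g + (1 / 2) * dHH H μT0 μS0 + (1 / 2) * dHH H μT1 μS1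
        + (errE μS0 gs f + errE μT0 gs f) + (errE μS1 gs f + errE μT1 gs f) := by
  have hgm := hmeas g hg
  have hgsm := hmeas gs hgs
  have hgb := hbin g hg
  have hgsb := hbin gs hgs
  -- half dHH bound on disagreement probability difference
  have hd : ∀ (μ ν : Measure Z), IsProbabilityMeasure μ → IsProbabilityMeasure ν →
      |(μ {z | g z ≠ gs z}).toReal - (ν {z | g z ≠ gs z}).toReal| ≤ (1/2) * dHH H μ ν := by
    intro μ ν hμ hν
    have hbdd : BddAbove (Set.range fun p : H × H =>
        |(μ {z | p.1.1 z ≠ p.2.1 z}).toReal - (ν {z | p.1.1 z ≠ p.2.1 z}).toReal|) := by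
      refine ⟨2, fun x hx => ?_⟩
      obtain ⟨p, rfl⟩ := hx
      have h1 : (μ {z | p.1.1 z ≠ p.2.1 z}).toReal ≤ 1 := by
        have := prob_le_one (μ := μ) (s := {z | p.1.1 z ≠ p.2.1 z})
        exact ENNReal.toReal_le_of_le_ofReal one_pos.le (by simpa using this)
      have h2 : (ν {z | p.1.1 z ≠ p.2.1 z}).toReal ≤ 1 := by
        have := prob_le_one (μ := ν) (s := {z | p.1.1 z ≠ p.2.1 z})
        exact ENNReal.toReal_le_of_le_ofReal one_pos.le (by simpa using this)
      have h3 : (0:ℝ) ≤ (μ {z | p.1.1 z ≠ p.2.1 z}).toReal := ENNReal.toReal_nonneg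
      have h4 : (0:ℝ) ≤ (ν {z | p.1.1 z ≠ p.2.1 z}).toReal := ENNReal.toReal_nonneg
      rw [abs_le]; constructor <;> nlinarith
    have hle := le_ciSup hbdd ((⟨g, hg⟩, ⟨gs, hgs⟩) : H × H)
    simp only [dHH]
    linarith
  -- per-group shift bound
  have hshift : ∀ (μ ν : Measure Z), IsProbabilityMeasure μ → IsProbabilityMeasure ν →
      f =ᵐ[μ] (fun _ => 0) → f =ᵐ[ν] (fun _ => 0) →
      |(∫ z, g z ∂μ) - ∫ z, g z ∂ν| ≤
        (1/2) * dHH H μ ν + (errE ν gs f + errE μ gs f) := by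
    intro μ ν hμ hν hfμ hfν
    have h1 := onestep μ g gs f hgm hgsm hgb hgsb hfμ
    have h2 := onestep ν g gs f hgm hgsm hgb hgsb hfν
    have h3 := hd μ ν hμ hν
    simp only [errE]
    set a := ∫ z, g z ∂μ
    set b := ∫ z, g z ∂ν
    set p := (μ {z | g z ≠ gs z}).toReal
    set q := (ν {z | g z ≠ gs z}).toReal
    calc |a - b| ≤ |a - p| + |p - q| + |q - b| := (abs_sub_le a p b).trans (by linarith [abs_sub_le p q b])
      _ ≤ _ := by rw [abs_sub_comm q b]; linarith
  have hT0 := hshift μT0 μS0 inferInstance inferInstance hfT0 hfS0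
  have hT1 := hshift μT1 μS1 inferInstance inferInstance hfT1 hfS1
  simp only [eopDiff] at *
  set a0 := ∫ z, g z ∂μT0
  set a1 := ∫ z, g z ∂μT1
  set b0 := ∫ z, g z ∂μS0
  set b1 := ∫ z, g z ∂μS1
  calc |a0 - a1| ≤ |b0 - b1| + |a0 - b0| + |b1 - a1| := (abs_sub_le a0 b0 a1).trans (by linarith [abs_sub_le b0 b1 a1])
    _ ≤ _ := by rw [abs_sub_comm b1 a1]; linarith
end

section
/- For any hypothesis g in a symmetric hypothesis space H, the equalized odds distance in the target domain satisfies Δ_{EO,T}(g) ≤ Δ_{EO,S}(g) + (1/2)[d_{HΔH}(D_{T_0^0}, D_{S_0^0}) + d_{HΔH}(D_{T_1^0}, D_{S_1^0}) + d_{HΔH}(D_{T_0^1}, D_{S_0^1}) + d_{HΔH}(D_{T_1^1}, D_{S_1^1})] + Σ_{α∈{0,1}, l∈{0,1}} λ_α^l, where λ_α^l = ε_{S_α^l}(g*, f) + ε_{T_α^l}(g*, f) for any fixed g* ∈ H. -/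
open MeasureTheory

/-- Equalized odds distance
`Δ_{EO,D}(g) = |E_{D_0^0}[g] − E_{D_1^0}[g]| + |E_{D_0^1}[1−g] − E_{D_1^1}[1−g]|`. -/
noncomputable def eoDiff {Z : Type*} [MeasurableSpace Z]
    (μ00 μ10 μ01 μ11 : Measure Z) (g : Z → ℝ) : ℝ :=
  |(∫ z, g z ∂μ00) - ∫ z, g z ∂μ10| +
    |(∫ z, (1 - g z) ∂μ01) - ∫ z, (1 - g z) ∂μ11|

section Aux

variable {Z : Type*} [MeasurableSpace Z]

lemma aux_int_bdd {μ : Measure Z} [IsProbabilityMeasure μ] {u : Z → ℝ}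
    (hm : AEStronglyMeasurable u μ) (hb : ∀ᵐ z ∂μ, ‖u z‖ ≤ 1) : Integrable u μ :=
  (integrable_const (1:ℝ)).mono' hm hb

lemma aux_int_gf {μ : Measure Z} [IsProbabilityMeasure μ] {g : Z → ℝ}
    (hb : ∀ z, g z = 0 ∨ g z = 1) (hm : Measurable g)
    {f : Z → ℝ} {c : ℝ} (hc : c = 0 ∨ c = 1) (hf : f =ᵐ[μ] fun _ => c) :
    Integrable (fun z => |g z - f z|) μ := by
  have heq : (fun z => |g z - f z|) =ᵐ[μ] fun z => |g z - c| := by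
    filter_upwards [hf] with z hz; simp [hz]
  refine Integrable.congr ?_ heq.symm
  refine aux_int_bdd ((hm.sub measurable_const).abs.aestronglyMeasurable) ?_
  filter_upwards with z
  rcases hb z with h | h <;> rcases hc with h' | h' <;> simp [h, h'] <;> norm_num

lemma aux_int_gg {μ : Measure Z} [IsProbabilityMeasure μ] {g g' : Z → ℝ}
    (hb : ∀ z, g z = 0 ∨ g z = 1) (hb' : ∀ z, g' z = 0 ∨ g' z = 1)
    (hm : Measurable g) (hm' : Measurable g') :
    Integrable (fun z => |g z - g' z|) μ := by
  refine aux_int_bdd ((hm.sub hm').abs.aestronglyMeasurable) ?_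
  filter_upwards with z
  rcases hb z with h | h <;> rcases hb' z with h' | h' <;> simp [h, h'] <;> norm_num

lemma errE_eq_measure {μ : Measure Z} {g g' : Z → ℝ}
    (hb : ∀ z, g z = 0 ∨ g z = 1) (hb' : ∀ z, g' z = 0 ∨ g' z = 1)
    (hm : Measurable g) (hm' : Measurable g') :
    errE μ g g' = (μ {z | g z ≠ g' z}).toReal := by
  have hs : MeasurableSet {z | g z ≠ g' z} :=
    (measurableSet_eq_fun hm hm').compl
  have hfun : (fun z => |g z - g' z|) = ({z | g z ≠ g' z}).indicator 1 := by
    funext z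
    by_cases h : g z = g' z
    · simp [Set.indicator, h]
    · rcases hb z with h1 | h1 <;> rcases hb' z with h2 | h2 <;>
        simp_all [Set.indicator] <;> norm_num
  rw [errE, hfun, integral_indicator_one hs]; rfl

lemma errE_tri {μ : Measure Z} [IsProbabilityMeasure μ] {g g' : Z → ℝ}
    (hb : ∀ z, g z = 0 ∨ g z = 1) (hb' : ∀ z, g' z = 0 ∨ g' z = 1)
    (hm : Measurable g) (hm' : Measurable g')
    {f : Z → ℝ} {c : ℝ} (hc : c = 0 ∨ c = 1) (hf : f =ᵐ[μ] fun _ => c) :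
    errE μ g f ≤ errE μ g g' + errE μ g' f := by
  have i1 := aux_int_gf hb hm hc hf
  have i2 := aux_int_gg hb hb' hm hm' (μ := μ)
  have i3 := aux_int_gf hb' hm' hc hf
  calc errE μ g f ≤ ∫ z, (|g z - g' z| + |g' z - f z|) ∂μ := by
        refine integral_mono i1 (i2.add i3) fun z => abs_sub_le _ _ _
    _ = errE μ g g' + errE μ g' f := integral_add i2 i3

lemma dHH_bound (H : Set (Z → ℝ)) {μ ν : Measure Z}
    [IsProbabilityMeasure μ] [IsProbabilityMeasure ν]
    (hb : ∀ h ∈ H, ∀ z, h z = 0 ∨ h z = 1) (hm : ∀ h ∈ H, Measurable h)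
    {g g' : Z → ℝ} (hg : g ∈ H) (hg' : g' ∈ H) :
    |errE μ g g' - errE ν g g'| ≤ (1/2) * dHH H μ ν := by
  have h1 := errE_eq_measure (μ := μ) (hb g hg) (hb g' hg') (hm g hg) (hm g' hg')
  have h2 := errE_eq_measure (μ := ν) (hb g hg) (hb g' hg') (hm g hg) (hm g' hg')
  rw [h1, h2]
  have hbdd : BddAbove (Set.range fun p : H × H =>
      |(μ {z | p.1.1 z ≠ p.2.1 z}).toReal - (ν {z | p.1.1 z ≠ p.2.1 z}).toReal|) := by
    refine ⟨2, ?_⟩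
    rintro x ⟨p, rfl⟩
    have ha : (μ {z | p.1.1 z ≠ p.2.1 z}).toReal ≤ 1 := by
      have := prob_le_one (μ := μ) (s := {z | p.1.1 z ≠ p.2.1 z})
      simpa using ENNReal.toReal_le_toReal (measure_ne_top _ _) (by simp) |>.mpr this
    have hb' : (ν {z | p.1.1 z ≠ p.2.1 z}).toReal ≤ 1 := by
      have := prob_le_one (μ := ν) (s := {z | p.1.1 z ≠ p.2.1 z})
      simpa using ENNReal.toReal_le_toReal (measure_ne_top _ _) (by simp) |>.mpr this
    have ha0 : (0:ℝ) ≤ (μ {z | p.1.1 z ≠ p.2.1 z}).toReal := ENNReal.toReal_nonneg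
    have hb0 : (0:ℝ) ≤ (ν {z | p.1.1 z ≠ p.2.1 z}).toReal := ENNReal.toReal_nonneg
    rw [abs_le]; constructor <;> linarith
  have hle := le_ciSup hbdd ((⟨g, hg⟩, ⟨g', hg'⟩) : H × H)
  rw [dHH]; linarith

lemma errE_tri2 {μ : Measure Z} [IsProbabilityMeasure μ] {g g' : Z → ℝ}
    (hb : ∀ z, g z = 0 ∨ g z = 1) (hb' : ∀ z, g' z = 0 ∨ g' z = 1)
    (hm : Measurable g) (hm' : Measurable g')
    {f : Z → ℝ} {c : ℝ} (hc : c = 0 ∨ c = 1) (hf : f =ᵐ[μ] fun _ => c) :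
    errE μ g g' ≤ errE μ g f + errE μ g' f := by
  have i1 := aux_int_gf hb hm hc hf
  have i2 := aux_int_gg hb hb' hm hm' (μ := μ)
  have i3 := aux_int_gf hb' hm' hc hf
  calc errE μ g g' ≤ ∫ z, (|g z - f z| + |g' z - f z|) ∂μ := by
        refine integral_mono i2 (i1.add i3) fun z => ?_
        have h := abs_sub_le (g z) (f z) (g' z)
        rwa [abs_sub_comm (f z)] at h
    _ = errE μ g f + errE μ g' f := integral_add i1 i3

lemma pair_bound (H : Set (Z → ℝ)) {μT μS : Measure Z}
    [IsProbabilityMeasure μT] [IsProbabilityMeasure μS]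
    (hbin : ∀ h ∈ H, ∀ z, h z = 0 ∨ h z = 1) (hmeas : ∀ h ∈ H, Measurable h)
    {g gs : Z → ℝ} (hg : g ∈ H) (hgs : gs ∈ H)
    {f : Z → ℝ} {c : ℝ} (hc : c = 0 ∨ c = 1)
    (hfT : f =ᵐ[μT] fun _ => c) (hfS : f =ᵐ[μS] fun _ => c) :
    |errE μT g f - errE μS g f| ≤
      (1/2) * dHH H μT μS + (errE μS gs f + errE μT gs f) := by
  have hbg := hbin g hg; have hbgs := hbin gs hgs
  have hmg := hmeas g hg; have hmgs := hmeas gs hgs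
  have t1 : errE μT g f ≤ errE μT g gs + errE μT gs f := errE_tri hbg hbgs hmg hmgs hc hfT
  have t2 : errE μS g f ≤ errE μS g gs + errE μS gs f := errE_tri hbg hbgs hmg hmgs hc hfS
  have t3 : errE μT g gs ≤ errE μT g f + errE μT gs f := errE_tri2 hbg hbgs hmg hmgs hc hfT
  have t4 : errE μS g gs ≤ errE μS g f + errE μS gs f := errE_tri2 hbg hbgs hmg hmgs hc hfS
  have hd := dHH_bound H hbin hmeas hg hgs (μ := μT) (ν := μS)
  have hd' := abs_le.mp hd
  rw [abs_le]; constructor <;> [linarith [hd'.1]; linarith [hd'.2]]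

lemma int_eq_errE0 {μ : Measure Z} {g f : Z → ℝ}
    (hb : ∀ z, g z = 0 ∨ g z = 1) (hf : f =ᵐ[μ] fun _ => 0) :
    ∫ z, g z ∂μ = errE μ g f := by
  refine integral_congr_ae ?_
  filter_upwards [hf] with z hz
  rcases hb z with h | h <;> simp [h, hz]

lemma int_eq_errE1 {μ : Measure Z} {g f : Z → ℝ}
    (hb : ∀ z, g z = 0 ∨ g z = 1) (hf : f =ᵐ[μ] fun _ => 1) :
    ∫ z, (1 - g z) ∂μ = errE μ g f := by
  refine integral_congr_ae ?_
  filter_upwards [hf] with z hz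
  rcases hb z with h | h <;> simp [h, hz]

end Aux

theorem stmt4 {Z : Type*} [MeasurableSpace Z] (H : Set (Z → ℝ))
    (hbin : ∀ h ∈ H, ∀ z, h z = 0 ∨ h z = 1)
    (hmeas : ∀ h ∈ H, Measurable h)
    (hsym : ∀ h ∈ H, (fun z => 1 - h z) ∈ H)
    (μS00 μS10 μS01 μS11 μT00 μT10 μT01 μT11 : Measure Z)
    [IsProbabilityMeasure μS00] [IsProbabilityMeasure μS10]
    [IsProbabilityMeasure μS01] [IsProbabilityMeasure μS11]
    [IsProbabilityMeasure μT00] [IsProbabilityMeasure μT10]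
    [IsProbabilityMeasure μT01] [IsProbabilityMeasure μT11]
    (f : Z → ℝ)
    (hfS00 : f =ᵐ[μS00] fun _ => 0) (hfS10 : f =ᵐ[μS10] fun _ => 0)
    (hfS01 : f =ᵐ[μS01] fun _ => 1) (hfS11 : f =ᵐ[μS11] fun _ => 1)
    (hfT00 : f =ᵐ[μT00] fun _ => 0) (hfT10 : f =ᵐ[μT10] fun _ => 0)
    (hfT01 : f =ᵐ[μT01] fun _ => 1) (hfT11 : f =ᵐ[μT11] fun _ => 1)
    (g : Z → ℝ) (hg : g ∈ H) (gs : Z → ℝ) (hgs : gs ∈ H) :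
    eoDiff μT00 μT10 μT01 μT11 g ≤
      eoDiff μS00 μS10 μS01 μS11 g +
        (1 / 2) * (dHH H μT00 μS00 + dHH H μT10 μS10 +
          dHH H μT01 μS01 + dHH H μT11 μS11) +
        ((errE μS00 gs f + errE μT00 gs f) + (errE μS10 gs f + errE μT10 gs f) +
          (errE μS01 gs f + errE μT01 gs f) + (errE μS11 gs f + errE μT11 gs f)) := by
  have hbg := hbin g hg
  have p00 := pair_bound H hbin hmeas hg hgs (Or.inl rfl) hfT00 hfS00
  have p10 := pair_bound H hbin hmeas hg hgs (Or.inl rfl) hfT10 hfS10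
  have p01 := pair_bound H hbin hmeas hg hgs (Or.inr rfl) hfT01 hfS01
  have p11 := pair_bound H hbin hmeas hg hgs (Or.inr rfl) hfT11 hfS11
  rw [eoDiff, eoDiff,
    int_eq_errE0 hbg hfT00, int_eq_errE0 hbg hfT10,
    int_eq_errE1 hbg hfT01, int_eq_errE1 hbg hfT11,
    int_eq_errE0 hbg hfS00, int_eq_errE0 hbg hfS10,
    int_eq_errE1 hbg hfS01, int_eq_errE1 hbg hfS11]
  have q00 := abs_le.mp p00
  have q10 := abs_le.mp p10
  have q01 := abs_le.mp p01
  have q11 := abs_le.mp p11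
  have h1 : |errE μT00 g f - errE μT10 g f| ≤
      |errE μS00 g f - errE μS10 g f| +
        ((1/2) * dHH H μT00 μS00 + (errE μS00 gs f + errE μT00 gs f)) +
        ((1/2) * dHH H μT10 μS10 + (errE μS10 gs f + errE μT10 gs f)) := by
    rw [abs_le]
    constructor <;>
      [linarith [q00.1, q10.2, neg_abs_le (errE μS00 g f - errE μS10 g f)];
       linarith [q00.2, q10.1, le_abs_self (errE μS00 g f - errE μS10 g f)]]
  have h2 : |errE μT01 g f - errE μT11 g f| ≤
      |errE μS01 g f - errE μS11 g f| +
        ((1/2) * dHH H μT01 μS01 + (errE μS01 gs f + errE μT01 gs f)) +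
        ((1/2) * dHH H μT11 μS11 + (errE μS11 gs f + errE μT11 gs f)) := by
    rw [abs_le]
    constructor <;>
      [linarith [q01.1, q11.2, neg_abs_le (errE μS01 g f - errE μS11 g f)];
       linarith [q01.2, q11.1, le_abs_self (errE μS01 g f - errE μS11 g f)]]
  linarith
end

section
/- Let H have VC dimension d, and for each α ∈ {0,1} and l ∈ {0,1} let U_{S_α^l}, U_{T_α^l} be samples of size m' from D_{S_α^l}, D_{T_α^l}. Then for any δ ∈ (0,1), with probability at least 1 − δ, for every g in the symmetric hypothesis space H: Δ_{EO,T}(g) ≤ Δ_{EO,S}(g) + (1/2) Σ_{α,l ∈ {0,1}} d̂_{HΔH}(U_{T_α^l}, U_{S_α^l}) + 16√((2d log(2m') + log(2/δ))/m') + Σ_{α,l} λ_α^l, where λ_α^l = ε_{S_α^l}(g*, f) + ε_{T_α^l}(g*, f). -/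
open MeasureTheory

/-- Empirical divergence `d̂_{HΔH}(U,U')` on size-`m` samples. -/
noncomputable def dHHemp {Z : Type*} (H : Set (Z → ℝ)) {m : ℕ}
    (U U' : Fin m → Z) : ℝ :=
  2 * ⨆ p : H × H,
    |(∑ i, if p.1.1 (U i) ≠ p.2.1 (U i) then (1 : ℝ) else 0) / m -
      (∑ i, if p.1.1 (U' i) ≠ p.2.1 (U' i) then (1 : ℝ) else 0) / m|

section myaux
open ProbabilityTheory Real
lemma my_exp_le_quad {t : ℝ} (ht : |t| ≤ 1) : Real.exp t ≤ 1 + t + t ^ 2 := by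
  have h := Real.exp_bound ht (n := 2) (by norm_num)
  have h2 : ∑ m ∈ Finset.range 2, t ^ m / m.factorial = 1 + t := by
    simp [Finset.sum_range_succ]
  rw [h2] at h
  have h3 := (abs_le.1 h).2
  have habs : |t| ^ 2 = t ^ 2 := sq_abs t
  norm_num at h3
  nlinarith [sq_nonneg t]

lemma my_bern_mgf {c w : ℝ} (hc0 : 0 ≤ c) (hc1 : c ≤ 1) (hw : |w| ≤ 1) :
    c * Real.exp (w * (1 - c)) + (1 - c) * Real.exp (w * (0 - c)) ≤ Real.exp (w ^ 2 / 4) := by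
  have hw1 : -1 ≤ w ∧ w ≤ 1 := abs_le.1 hw
  have h1 : |w * (1 - c)| ≤ 1 := by
    rw [abs_mul]
    have h1c : |1 - c| ≤ 1 := by rw [abs_le]; constructor <;> linarith
    calc |w| * |1 - c| ≤ 1 * 1 := by
          exact mul_le_mul hw h1c (abs_nonneg _) zero_le_one
      _ = 1 := by norm_num
  have h2 : |w * (0 - c)| ≤ 1 := by
    rw [abs_mul]
    have h2c : |0 - c| ≤ 1 := by rw [abs_le]; constructor <;> linarith
    calc |w| * |0 - c| ≤ 1 * 1 := by
          exact mul_le_mul hw h2c (abs_nonneg _) zero_le_one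
      _ = 1 := by norm_num
  have e1 := my_exp_le_quad h1
  have e2 := my_exp_le_quad h2
  have m1 : c * Real.exp (w * (1 - c)) ≤ c * (1 + w * (1 - c) + (w * (1 - c)) ^ 2) :=
    mul_le_mul_of_nonneg_left e1 hc0
  have m2 : (1 - c) * Real.exp (w * (0 - c)) ≤ (1 - c) * (1 + w * (0 - c) + (w * (0 - c)) ^ 2) :=
    mul_le_mul_of_nonneg_left e2 (by linarith)
  have key : c * (1 + w * (1 - c) + (w * (1 - c)) ^ 2)
      + (1 - c) * (1 + w * (0 - c) + (w * (0 - c)) ^ 2) = 1 + w ^ 2 * (c * (1 - c)) := by ring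
  have hc4 : c * (1 - c) ≤ 1 / 4 := by nlinarith [sq_nonneg (2 * c - 1)]
  have hmono : 1 + w ^ 2 * (c * (1 - c)) ≤ 1 + w ^ 2 / 4 := by nlinarith [sq_nonneg w]
  have hexp : 1 + w ^ 2 / 4 ≤ Real.exp (w ^ 2 / 4) := by
    linarith [Real.add_one_le_exp (w ^ 2 / 4)]
  linarith

lemma my_integrable_of_bdd {W : Type*} [MeasurableSpace W] {μ : Measure W} [IsFiniteMeasure μ]
    {φ : W → ℝ} (hφ : Measurable φ) {C : ℝ} (hC : ∀ x, |φ x| ≤ C) : Integrable φ μ :=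
  Integrable.mono' (integrable_const C) hφ.aestronglyMeasurable (Filter.Eventually.of_forall hC)

lemma my_integral_exp_ind {Z : Type*} [MeasurableSpace Z] {ν : Measure Z}
    [IsProbabilityMeasure ν] {B : Set Z} (hB : MeasurableSet B) (w : ℝ) :
    ∫ z, Real.exp (w * (B.indicator (fun _ => (1 : ℝ)) z - (ν B).toReal)) ∂ν
      = (ν B).toReal * Real.exp (w * (1 - (ν B).toReal))
        + (1 - (ν B).toReal) * Real.exp (w * (0 - (ν B).toReal)) := by
  set a := (ν B).toReal with ha
  have hfun : (fun z => Real.exp (w * (B.indicator (fun _ => (1 : ℝ)) z - a)))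
      = fun z => B.indicator (fun _ => Real.exp (w * (1 - a)) - Real.exp (w * (0 - a))) z
          + Real.exp (w * (0 - a)) := by
    funext z
    by_cases hz : z ∈ B
    · rw [Set.indicator_of_mem hz, Set.indicator_of_mem hz]; ring
    · rw [Set.indicator_of_notMem hz, Set.indicator_of_notMem hz]; ring_nf
  rw [hfun, integral_add ((integrable_const _).indicator hB) (integrable_const _),
    integral_indicator_const _ hB, integral_const, probReal_univ]
  simp only [smul_eq_mul, ENNReal.toReal_one, one_mul, measureReal_def, ← ha]
  ring

lemma my_integral_exp_ind_le {Z : Type*} [MeasurableSpace Z] {ν : Measure Z}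
    [IsProbabilityMeasure ν] {B : Set Z} (hB : MeasurableSet B) {w : ℝ} (hw : |w| ≤ 1) :
    ∫ z, Real.exp (w * (B.indicator (fun _ => (1 : ℝ)) z - (ν B).toReal)) ∂ν
      ≤ Real.exp (w ^ 2 / 4) := by
  rw [my_integral_exp_ind hB w]
  have h0 : 0 ≤ (ν B).toReal := ENNReal.toReal_nonneg
  have h1 : (ν B).toReal ≤ 1 := by
    have := prob_le_one (μ := ν) (s := B)
    exact (ENNReal.toReal_le_of_le_ofReal zero_le_one (by simpa using this))
  exact my_bern_mgf h0 h1 hw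
lemma my_pi_integral_pow {Z : Type*} [MeasurableSpace Z] (ν : Measure Z)
    [IsProbabilityMeasure ν] (m : ℕ) (φ : Z → ℝ) :
    ∫ x : Fin m → Z, ∏ j, φ (x j) ∂(Measure.pi fun _ : Fin m => ν)
      = (∫ z, φ z ∂ν) ^ m := by
  letI : MeasureSpace Z := ⟨ν⟩
  haveI : SigmaFinite (volume : Measure Z) := by
    change SigmaFinite ν; infer_instance
  have hvol : (Measure.pi fun _ : Fin m => ν) = (volume : Measure (Fin m → Z)) := by
    rw [volume_pi]
    rfl
  rw [hvol]
  have h := MeasureTheory.integral_fintype_prod_eq_pow (ι := Fin m) (μ := ν) φ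
  rw [Fintype.card_fin] at h
  exact h

lemma my_chernoff_one {Z : Type*} [MeasurableSpace Z] (m' : ℕ)
    (ν ν' : Measure Z) [IsProbabilityMeasure ν] [IsProbabilityMeasure ν']
    (ψ₁ ψ₂ : Z → ℝ) (hψ₁m : Measurable ψ₁) (hψ₂m : Measurable ψ₂)
    (hψ₁b : ∀ z, |ψ₁ z| ≤ 1) (hψ₂b : ∀ z, |ψ₂ z| ≤ 1)
    {v : ℝ} (hv0 : 0 < v) (hv1 : v ≤ 1)
    (h₁ : ∫ z, Real.exp (v * ψ₁ z) ∂ν ≤ Real.exp (v ^ 2 / 4))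
    (h₂ : ∫ z, Real.exp (v * ψ₂ z) ∂ν' ≤ Real.exp (v ^ 2 / 4)) :
    ((Measure.pi fun _ : Fin m' => ν).prod (Measure.pi fun _ : Fin m' => ν'))
      {p : (Fin m' → Z) × (Fin m' → Z) |
        (m' : ℝ) * v ≤ (∑ j, ψ₁ (p.1 j)) + ∑ j, ψ₂ (p.2 j)}
      ≤ ENNReal.ofReal (Real.exp (-((m' : ℝ) * v ^ 2 / 2))) := by
  set P := (Measure.pi fun _ : Fin m' => ν).prod (Measure.pi fun _ : Fin m' => ν') with hP
  set X : (Fin m' → Z) × (Fin m' → Z) → ℝ :=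
    fun p => (∑ j, ψ₁ (p.1 j)) + ∑ j, ψ₂ (p.2 j) with hX
  have hXmeas : Measurable X := by
    apply Measurable.add
    · exact Finset.measurable_sum _ fun j _ =>
        hψ₁m.comp ((measurable_pi_apply j).comp measurable_fst)
    · exact Finset.measurable_sum _ fun j _ =>
        hψ₂m.comp ((measurable_pi_apply j).comp measurable_snd)
  have hXbdd : ∀ p, |X p| ≤ 2 * m' := by
    intro p
    have b1 : |∑ j, ψ₁ (p.1 j)| ≤ (m' : ℝ) := by
      calc |∑ j, ψ₁ (p.1 j)| ≤ ∑ j, |ψ₁ (p.1 j)| := Finset.abs_sum_le_sum_abs _ _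
        _ ≤ ∑ _j : Fin m', (1 : ℝ) := Finset.sum_le_sum fun j _ => hψ₁b _
        _ = m' := by simp
    have b2 : |∑ j, ψ₂ (p.2 j)| ≤ (m' : ℝ) := by
      calc |∑ j, ψ₂ (p.2 j)| ≤ ∑ j, |ψ₂ (p.2 j)| := Finset.abs_sum_le_sum_abs _ _
        _ ≤ ∑ _j : Fin m', (1 : ℝ) := Finset.sum_le_sum fun j _ => hψ₂b _
        _ = m' := by simp
    calc |X p| ≤ |∑ j, ψ₁ (p.1 j)| + |∑ j, ψ₂ (p.2 j)| := abs_add_le _ _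
      _ ≤ (m' : ℝ) + m' := add_le_add b1 b2
      _ = 2 * m' := by ring
  have hvabs : |v| ≤ 1 := abs_le.2 ⟨by linarith, hv1⟩
  have hint : Integrable (fun p => Real.exp (v * X p)) P := by
    have hm : Measurable fun p => Real.exp (v * X p) := (hXmeas.const_mul v).exp
    apply my_integrable_of_bdd hm (C := Real.exp (2 * m'))
    intro p
    rw [abs_of_nonneg (Real.exp_pos _).le]
    apply Real.exp_le_exp.2
    calc v * X p ≤ |v * X p| := le_abs_self _
      _ = |v| * |X p| := abs_mul _ _
      _ ≤ 1 * (2 * m') := mul_le_mul hvabs (hXbdd p) (abs_nonneg _) zero_le_one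
      _ = 2 * m' := one_mul _
  have markov := measure_ge_le_exp_mul_mgf (μ := P) (X := X) (t := v) ((m' : ℝ) * v) hv0.le hint
  have hmgf : mgf X P v
      = (∫ z, Real.exp (v * ψ₁ z) ∂ν) ^ m' * (∫ z, Real.exp (v * ψ₂ z) ∂ν') ^ m' := by
    have hfun : (fun p : (Fin m' → Z) × (Fin m' → Z) => Real.exp (v * X p))
        = fun p => (∏ j, Real.exp (v * ψ₁ (p.1 j))) * ∏ j, Real.exp (v * ψ₂ (p.2 j)) := by
      funext p
      rw [hX]
      simp only [mul_add, Real.exp_add, Finset.mul_sum, Real.exp_sum]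
    calc mgf X P v = ∫ p, Real.exp (v * X p) ∂P := rfl
      _ = ∫ p : (Fin m' → Z) × (Fin m' → Z),
            (∏ j, Real.exp (v * ψ₁ (p.1 j))) * ∏ j, Real.exp (v * ψ₂ (p.2 j)) ∂P := by
          rw [hfun]
      _ = (∫ x : Fin m' → Z, ∏ j, Real.exp (v * ψ₁ (x j)) ∂(Measure.pi fun _ : Fin m' => ν))
            * ∫ y : Fin m' → Z, ∏ j, Real.exp (v * ψ₂ (y j)) ∂(Measure.pi fun _ : Fin m' => ν') := by
          rw [hP]
          exact integral_prod_mul (μ := Measure.pi fun _ : Fin m' => ν)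
            (ν := Measure.pi fun _ : Fin m' => ν')
            (f := fun x => ∏ j, Real.exp (v * ψ₁ (x j)))
            (g := fun y => ∏ j, Real.exp (v * ψ₂ (y j)))
      _ = _ := by
          rw [my_pi_integral_pow ν m' (fun z => Real.exp (v * ψ₁ z)),
            my_pi_integral_pow ν' m' (fun z => Real.exp (v * ψ₂ z))]
  have hmgf_le : mgf X P v ≤ Real.exp ((m' : ℝ) * (v ^ 2 / 4)) * Real.exp ((m' : ℝ) * (v ^ 2 / 4)) := by
    rw [hmgf, Real.exp_nat_mul]
    have n1 : (0:ℝ) ≤ ∫ z, Real.exp (v * ψ₁ z) ∂ν := integral_nonneg fun z => (Real.exp_pos _).le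
    have n2 : (0:ℝ) ≤ ∫ z, Real.exp (v * ψ₂ z) ∂ν' := integral_nonneg fun z => (Real.exp_pos _).le
    exact mul_le_mul (pow_le_pow_left₀ n1 h₁ m') (pow_le_pow_left₀ n2 h₂ m')
      (pow_nonneg n2 m') (pow_nonneg (Real.exp_pos _).le m')
  have hfinal : (P {p | (m' : ℝ) * v ≤ X p}).toReal ≤ Real.exp (-((m' : ℝ) * v ^ 2 / 2)) := by
    calc (P {p | (m' : ℝ) * v ≤ X p}).toReal ≤ Real.exp (-v * ((m' : ℝ) * v)) * mgf X P v := markov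
      _ ≤ Real.exp (-v * ((m' : ℝ) * v))
            * (Real.exp ((m' : ℝ) * (v ^ 2 / 4)) * Real.exp ((m' : ℝ) * (v ^ 2 / 4))) :=
          mul_le_mul_of_nonneg_left hmgf_le (Real.exp_pos _).le
      _ = Real.exp (-((m' : ℝ) * v ^ 2 / 2)) := by
          rw [← Real.exp_add, ← Real.exp_add]
          congr 1
          ring
  have hne : P {p | (m' : ℝ) * v ≤ X p} ≠ ⊤ := measure_ne_top _ _
  calc P {p | (m' : ℝ) * v ≤ X p} = ENNReal.ofReal (P {p | (m' : ℝ) * v ≤ X p}).toReal :=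
        (ENNReal.ofReal_toReal hne).symm
    _ ≤ ENNReal.ofReal (Real.exp (-((m' : ℝ) * v ^ 2 / 2))) := ENNReal.ofReal_le_ofReal hfinal

lemma my_chernoff_pair {Z : Type*} [MeasurableSpace Z] (m' : ℕ) (hm : 0 < m')
    (ν ν' : Measure Z) [IsProbabilityMeasure ν] [IsProbabilityMeasure ν']
    {B : Set Z} (hB : MeasurableSet B) {v : ℝ} (hv0 : 0 < v) (hv1 : v ≤ 1) :
    ((Measure.pi fun _ : Fin m' => ν).prod (Measure.pi fun _ : Fin m' => ν'))
      {p : (Fin m' → Z) × (Fin m' → Z) |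
        v < |((∑ i, B.indicator (fun _ => (1 : ℝ)) (p.1 i)) / m'
              - (∑ i, B.indicator (fun _ => (1 : ℝ)) (p.2 i)) / m')
            - ((ν B).toReal - (ν' B).toReal)|}
      ≤ ENNReal.ofReal (2 * Real.exp (-((m' : ℝ) * v ^ 2 / 2))) := by
  have hvabs : |v| ≤ 1 := abs_le.2 ⟨by linarith, hv1⟩
  have hvabs' : |(-v)| ≤ 1 := by rwa [abs_neg]
  have hindm : Measurable (B.indicator (fun _ => (1 : ℝ))) := measurable_const.indicator hB
  have hind01 : ∀ z, 0 ≤ B.indicator (fun _ => (1 : ℝ)) z ∧ B.indicator (fun _ => (1 : ℝ)) z ≤ 1 := by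
    intro z
    by_cases hz : z ∈ B
    · rw [Set.indicator_of_mem hz]; norm_num
    · rw [Set.indicator_of_notMem hz]; norm_num
  have ha0 : 0 ≤ (ν B).toReal := ENNReal.toReal_nonneg
  have ha1 : (ν B).toReal ≤ 1 :=
    ENNReal.toReal_le_of_le_ofReal zero_le_one (by simpa using prob_le_one (μ := ν) (s := B))
  have hb0 : 0 ≤ (ν' B).toReal := ENNReal.toReal_nonneg
  have hb1 : (ν' B).toReal ≤ 1 :=
    ENNReal.toReal_le_of_le_ofReal zero_le_one (by simpa using prob_le_one (μ := ν') (s := B))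
  -- mgf bounds
  have hmg1 : ∫ z, Real.exp (v * (B.indicator (fun _ => (1 : ℝ)) z - (ν B).toReal)) ∂ν
      ≤ Real.exp (v ^ 2 / 4) := my_integral_exp_ind_le hB hvabs
  have hmg1' : ∫ z, Real.exp (v * ((ν B).toReal - B.indicator (fun _ => (1 : ℝ)) z)) ∂ν
      ≤ Real.exp (v ^ 2 / 4) := by
    have heq : (fun z => Real.exp (v * ((ν B).toReal - B.indicator (fun _ => (1 : ℝ)) z)))
        = fun z => Real.exp ((-v) * (B.indicator (fun _ => (1 : ℝ)) z - (ν B).toReal)) := by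
      funext z; congr 1; ring
    rw [heq]
    have := my_integral_exp_ind_le (ν := ν) hB hvabs'
    simpa [neg_sq] using this
  have hmg2 : ∫ z, Real.exp (v * ((ν' B).toReal - B.indicator (fun _ => (1 : ℝ)) z)) ∂ν'
      ≤ Real.exp (v ^ 2 / 4) := by
    have heq : (fun z => Real.exp (v * ((ν' B).toReal - B.indicator (fun _ => (1 : ℝ)) z)))
        = fun z => Real.exp ((-v) * (B.indicator (fun _ => (1 : ℝ)) z - (ν' B).toReal)) := by
      funext z; congr 1; ring
    rw [heq]
    have := my_integral_exp_ind_le (ν := ν') hB hvabs'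
    simpa [neg_sq] using this
  have hmg2' : ∫ z, Real.exp (v * (B.indicator (fun _ => (1 : ℝ)) z - (ν' B).toReal)) ∂ν'
      ≤ Real.exp (v ^ 2 / 4) := my_integral_exp_ind_le hB hvabs
  -- bounds on the ψ functions
  have hpsib : ∀ (c : ℝ), 0 ≤ c → c ≤ 1 → ∀ z, |B.indicator (fun _ => (1 : ℝ)) z - c| ≤ 1 := by
    intro c hc0 hc1 z
    rcases hind01 z with ⟨h0, h1⟩
    rw [abs_le]; constructor <;> linarith
  have hpsib' : ∀ (c : ℝ), 0 ≤ c → c ≤ 1 → ∀ z, |c - B.indicator (fun _ => (1 : ℝ)) z| ≤ 1 := by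
    intro c hc0 hc1 z
    rw [abs_sub_comm]; exact hpsib c hc0 hc1 z
  -- the two one-sided events
  have c1 := my_chernoff_one m' ν ν'
    (fun z => B.indicator (fun _ => (1 : ℝ)) z - (ν B).toReal)
    (fun z => (ν' B).toReal - B.indicator (fun _ => (1 : ℝ)) z)
    (hindm.sub measurable_const) (measurable_const.sub hindm)
    (hpsib _ ha0 ha1) (hpsib' _ hb0 hb1) hv0 hv1 hmg1 hmg2
  have c2 := my_chernoff_one m' ν ν'
    (fun z => (ν B).toReal - B.indicator (fun _ => (1 : ℝ)) z)
    (fun z => B.indicator (fun _ => (1 : ℝ)) z - (ν' B).toReal)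
    (measurable_const.sub hindm) (hindm.sub measurable_const)
    (hpsib' _ ha0 ha1) (hpsib _ hb0 hb1) hv0 hv1 hmg1' hmg2'
  -- event inclusion
  have hsub : {p : (Fin m' → Z) × (Fin m' → Z) |
        v < |((∑ i, B.indicator (fun _ => (1 : ℝ)) (p.1 i)) / m'
              - (∑ i, B.indicator (fun _ => (1 : ℝ)) (p.2 i)) / m')
            - ((ν B).toReal - (ν' B).toReal)|}
      ⊆ {p : (Fin m' → Z) × (Fin m' → Z) |
          (m' : ℝ) * v ≤ (∑ j, (B.indicator (fun _ => (1 : ℝ)) (p.1 j) - (ν B).toReal))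
            + ∑ j, ((ν' B).toReal - B.indicator (fun _ => (1 : ℝ)) (p.2 j))}
        ∪ {p : (Fin m' → Z) × (Fin m' → Z) |
          (m' : ℝ) * v ≤ (∑ j, ((ν B).toReal - B.indicator (fun _ => (1 : ℝ)) (p.1 j)))
            + ∑ j, (B.indicator (fun _ => (1 : ℝ)) (p.2 j) - (ν' B).toReal)} := by
    intro p hp
    simp only [Set.mem_setOf_eq] at hp
    have hm0 : (0 : ℝ) < m' := by exact_mod_cast hm
    set S1 := ∑ i, B.indicator (fun _ => (1 : ℝ)) (p.1 i) with hS1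
    set S2 := ∑ i, B.indicator (fun _ => (1 : ℝ)) (p.2 i) with hS2
    set W := (S1 / m' - S2 / m') - ((ν B).toReal - (ν' B).toReal) with hW
    have hsum1 : ∑ j, (B.indicator (fun _ => (1 : ℝ)) (p.1 j) - (ν B).toReal)
        = S1 - m' * (ν B).toReal := by
      rw [Finset.sum_sub_distrib, Finset.sum_const, Finset.card_univ, Fintype.card_fin,
        nsmul_eq_mul, hS1]
    have hsum2 : ∑ j, ((ν' B).toReal - B.indicator (fun _ => (1 : ℝ)) (p.2 j))
        = m' * (ν' B).toReal - S2 := by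
      rw [Finset.sum_sub_distrib, Finset.sum_const, Finset.card_univ, Fintype.card_fin,
        nsmul_eq_mul, hS2]
    have hsum1' : ∑ j, ((ν B).toReal - B.indicator (fun _ => (1 : ℝ)) (p.1 j))
        = m' * (ν B).toReal - S1 := by
      rw [Finset.sum_sub_distrib, Finset.sum_const, Finset.card_univ, Fintype.card_fin,
        nsmul_eq_mul, hS1]
    have hsum2' : ∑ j, (B.indicator (fun _ => (1 : ℝ)) (p.2 j) - (ν' B).toReal)
        = S2 - m' * (ν' B).toReal := by
      rw [Finset.sum_sub_distrib, Finset.sum_const, Finset.card_univ, Fintype.card_fin,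
        nsmul_eq_mul, hS2]
    rcases lt_abs.mp hp with h | h
    · left
      simp only [Set.mem_setOf_eq]
      rw [hsum1, hsum2]
      have : (m' : ℝ) * v ≤ m' * W := by
        exact (mul_le_mul_iff_right₀ hm0).2 h.le
      calc (m' : ℝ) * v ≤ m' * W := this
        _ = S1 - m' * (ν B).toReal + (m' * (ν' B).toReal - S2) := by
            rw [hW]; field_simp; ring
    · right
      simp only [Set.mem_setOf_eq]
      rw [hsum1', hsum2']
      have : (m' : ℝ) * v ≤ m' * (-W) := by
        exact (mul_le_mul_iff_right₀ hm0).2 h.le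
      calc (m' : ℝ) * v ≤ m' * (-W) := this
        _ = m' * (ν B).toReal - S1 + (S2 - m' * (ν' B).toReal) := by
            rw [hW]; field_simp; ring
  refine le_trans (measure_mono hsub) (le_trans (measure_union_le _ _)
    (le_trans (add_le_add c1 c2) (le_of_eq ?_)))
  rw [← ENNReal.ofReal_add (Real.exp_pos _).le (Real.exp_pos _).le]
  congr 1
  ring

section aux
variable {Z : Type*} [MeasurableSpace Z]

lemma my_emp_term_le_one {H : Set (Z → ℝ)} {m' : ℕ} (hm : 0 < m') (U U' : Fin m' → Z)
    (p : ↥H × ↥H) :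
    |(∑ i, if p.1.1 (U i) ≠ p.2.1 (U i) then (1 : ℝ) else 0) / m' -
      (∑ i, if p.1.1 (U' i) ≠ p.2.1 (U' i) then (1 : ℝ) else 0) / m'| ≤ 1 := by
  have hm0 : (0 : ℝ) < m' := by exact_mod_cast hm
  have key : ∀ (V : Fin m' → Z),
      0 ≤ (∑ i, if p.1.1 (V i) ≠ p.2.1 (V i) then (1 : ℝ) else 0) / m' ∧
      (∑ i, if p.1.1 (V i) ≠ p.2.1 (V i) then (1 : ℝ) else 0) / m' ≤ 1 := by
    intro V
    constructor
    · apply div_nonneg _ hm0.le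
      apply Finset.sum_nonneg
      intro i _
      split <;> norm_num
    · rw [div_le_one hm0]
      calc (∑ i, if p.1.1 (V i) ≠ p.2.1 (V i) then (1 : ℝ) else 0)
          ≤ ∑ _i : Fin m', (1 : ℝ) := by
            apply Finset.sum_le_sum
            intro i _
            split <;> norm_num
        _ = m' := by simp
  rcases key U with ⟨h1, h2⟩
  rcases key U' with ⟨h3, h4⟩
  rw [abs_le]; constructor <;> linarith

lemma my_bdd_emp {H : Set (Z → ℝ)} {m' : ℕ} (hm : 0 < m') (U U' : Fin m' → Z) :
    BddAbove (Set.range fun p : ↥H × ↥H =>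
      |(∑ i, if p.1.1 (U i) ≠ p.2.1 (U i) then (1 : ℝ) else 0) / m' -
        (∑ i, if p.1.1 (U' i) ≠ p.2.1 (U' i) then (1 : ℝ) else 0) / m'|) := by
  refine ⟨1, ?_⟩
  rintro x ⟨p, rfl⟩
  exact my_emp_term_le_one hm U U' p

lemma my_toReal_le_one (μ : Measure Z) [IsProbabilityMeasure μ] (s : Set Z) :
    (μ s).toReal ≤ 1 :=
  ENNReal.toReal_le_of_le_ofReal zero_le_one (by simpa using prob_le_one (μ := μ) (s := s))

lemma my_pop_term_le_one (ν ν' : Measure Z) [IsProbabilityMeasure ν] [IsProbabilityMeasure ν']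
    {H : Set (Z → ℝ)} (p : ↥H × ↥H) :
    |(ν {z | p.1.1 z ≠ p.2.1 z}).toReal - (ν' {z | p.1.1 z ≠ p.2.1 z}).toReal| ≤ 1 := by
  have a0 : (0:ℝ) ≤ (ν {z | p.1.1 z ≠ p.2.1 z}).toReal := ENNReal.toReal_nonneg
  have a1 := my_toReal_le_one ν {z | p.1.1 z ≠ p.2.1 z}
  have b0 : (0:ℝ) ≤ (ν' {z | p.1.1 z ≠ p.2.1 z}).toReal := ENNReal.toReal_nonneg
  have b1 := my_toReal_le_one ν' {z | p.1.1 z ≠ p.2.1 z}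
  rw [abs_le]; constructor <;> linarith

lemma my_bdd_pop (ν ν' : Measure Z) [IsProbabilityMeasure ν] [IsProbabilityMeasure ν']
    {H : Set (Z → ℝ)} :
    BddAbove (Set.range fun p : ↥H × ↥H =>
      |(ν {z | p.1.1 z ≠ p.2.1 z}).toReal - (ν' {z | p.1.1 z ≠ p.2.1 z}).toReal|) := by
  refine ⟨1, ?_⟩
  rintro x ⟨p, rfl⟩
  exact my_pop_term_le_one ν ν' p

lemma my_demp_nonneg {H : Set (Z → ℝ)} (hne : H.Nonempty) {m' : ℕ} (hm : 0 < m')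
    (U U' : Fin m' → Z) : 0 ≤ dHHemp H U U' := by
  haveI : Nonempty ↥H := hne.to_subtype
  obtain ⟨p⟩ := (inferInstance : Nonempty (↥H × ↥H))
  have h1 : (0:ℝ) ≤ |(∑ i, if p.1.1 (U i) ≠ p.2.1 (U i) then (1 : ℝ) else 0) / m' -
        (∑ i, if p.1.1 (U' i) ≠ p.2.1 (U' i) then (1 : ℝ) else 0) / m'| := abs_nonneg _
  have h2 := le_ciSup (my_bdd_emp (H := H) hm U U') p
  have : (0:ℝ) ≤ ⨆ p : ↥H × ↥H,
      |(∑ i, if p.1.1 (U i) ≠ p.2.1 (U i) then (1 : ℝ) else 0) / m' -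
        (∑ i, if p.1.1 (U' i) ≠ p.2.1 (U' i) then (1 : ℝ) else 0) / m'| := le_trans h1 h2
  have hd : dHHemp H U U' = 2 * ⨆ p : ↥H × ↥H,
      |(∑ i, if p.1.1 (U i) ≠ p.2.1 (U i) then (1 : ℝ) else 0) / m' -
        (∑ i, if p.1.1 (U' i) ≠ p.2.1 (U' i) then (1 : ℝ) else 0) / m'| := rfl
  rw [hd]; linarith

lemma my_dHH_le_two {H : Set (Z → ℝ)} (hne : H.Nonempty)
    (ν ν' : Measure Z) [IsProbabilityMeasure ν] [IsProbabilityMeasure ν'] :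
    dHH H ν ν' ≤ 2 := by
  haveI : Nonempty ↥H := hne.to_subtype
  have h : (⨆ p : ↥H × ↥H,
      |(ν {z | p.1.1 z ≠ p.2.1 z}).toReal - (ν' {z | p.1.1 z ≠ p.2.1 z}).toReal|) ≤ 1 :=
    ciSup_le fun p => my_pop_term_le_one ν ν' p
  have hd : dHH H ν ν' = 2 * ⨆ p : ↥H × ↥H,
      |(ν {z | p.1.1 z ≠ p.2.1 z}).toReal - (ν' {z | p.1.1 z ≠ p.2.1 z}).toReal| := rfl
  rw [hd]; linarith

end aux

lemma my_key_pair {Z : Type*} [MeasurableSpace Z] (H : Set (Z → ℝ))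
    (hmeas : ∀ h ∈ H, Measurable h) (hne : H.Nonempty)
    (m' : ℕ) (hm : 0 < m') (T : ℝ) (hT : 0 < T)
    (ν ν' : Measure Z) [IsProbabilityMeasure ν] [IsProbabilityMeasure ν'] :
    ∃ M : Set ((Fin m' → Z) × (Fin m' → Z)), MeasurableSet M ∧
      (∀ p ∈ M, dHH H ν ν' ≤ dHHemp H p.1 p.2 + T) ∧
      ((Measure.pi fun _ : Fin m' => ν).prod (Measure.pi fun _ : Fin m' => ν')) Mᶜ
        ≤ ENNReal.ofReal (2 * Real.exp (-((m' : ℝ) * (3 * T / 8) ^ 2 / 2))) := by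
  haveI : Nonempty ↥H := hne.to_subtype
  by_cases hT2 : 2 ≤ T
  · refine ⟨Set.univ, MeasurableSet.univ, ?_, ?_⟩
    · intro p _
      have h1 := my_dHH_le_two hne ν ν'
      have h2 := my_demp_nonneg hne hm p.1 p.2
      linarith
    · rw [Set.compl_univ]
      simp
  · push_neg at hT2
    set v := 3 * T / 8 with hv
    have hv0 : 0 < v := by rw [hv]; linarith
    have hv1 : v ≤ 1 := by rw [hv]; linarith
    -- choose a near-optimal pair
    set F : ↥H × ↥H → ℝ := fun p =>
      |(ν {z | p.1.1 z ≠ p.2.1 z}).toReal - (ν' {z | p.1.1 z ≠ p.2.1 z}).toReal| with hF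
    have hlt : (⨆ p, F p) - T / 8 < ⨆ p, F p := sub_lt_self _ (by linarith)
    obtain ⟨pstar, hpstar⟩ := exists_lt_of_lt_ciSup hlt
    set B : Set Z := {z | pstar.1.1 z ≠ pstar.2.1 z} with hBdef
    have hB : MeasurableSet B := by
      have h1 : Measurable (pstar.1.1 : Z → ℝ) := hmeas _ pstar.1.2
      have h2 : Measurable (pstar.2.1 : Z → ℝ) := hmeas _ pstar.2.2
      exact (measurableSet_eq_fun h1 h2).compl
    set a := (ν B).toReal with hadef
    set b := (ν' B).toReal with hbdef
    set M : Set ((Fin m' → Z) × (Fin m' → Z)) := {p |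
      |((∑ i, B.indicator (fun _ => (1 : ℝ)) (p.1 i)) / m'
          - (∑ i, B.indicator (fun _ => (1 : ℝ)) (p.2 i)) / m') - (a - b)| ≤ v} with hM
    have hWm : Measurable (fun p : (Fin m' → Z) × (Fin m' → Z) =>
        |((∑ i, B.indicator (fun _ => (1 : ℝ)) (p.1 i)) / m'
          - (∑ i, B.indicator (fun _ => (1 : ℝ)) (p.2 i)) / m') - (a - b)|) := by
      have hind : Measurable (B.indicator (fun _ => (1 : ℝ))) := measurable_const.indicator hB
      have h1 : Measurable (fun p : (Fin m' → Z) × (Fin m' → Z) =>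
          ∑ i, B.indicator (fun _ => (1 : ℝ)) (p.1 i)) :=
        Finset.measurable_sum _ fun i _ => hind.comp ((measurable_pi_apply i).comp measurable_fst)
      have h2 : Measurable (fun p : (Fin m' → Z) × (Fin m' → Z) =>
          ∑ i, B.indicator (fun _ => (1 : ℝ)) (p.2 i)) :=
        Finset.measurable_sum _ fun i _ => hind.comp ((measurable_pi_apply i).comp measurable_snd)
      exact (((h1.div_const _).sub (h2.div_const _)).sub measurable_const).abs
    have hMmeas : MeasurableSet M := measurableSet_le hWm measurable_const
    have hind_if : ∀ (V : Fin m' → Z),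
        (∑ i, if pstar.1.1 (V i) ≠ pstar.2.1 (V i) then (1 : ℝ) else 0)
          = ∑ i, B.indicator (fun _ => (1 : ℝ)) (V i) := by
      intro V
      apply Finset.sum_congr rfl
      intro i _
      by_cases hz : pstar.1.1 (V i) ≠ pstar.2.1 (V i)
      · rw [if_pos hz]
        exact (Set.indicator_of_mem (show V i ∈ B from hz) (fun _ => (1:ℝ))).symm
      · rw [if_neg hz]
        exact (Set.indicator_of_notMem (show V i ∉ B from hz) (fun _ => (1:ℝ))).symm
    refine ⟨M, hMmeas, ?_, ?_⟩
    · intro p hp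
      rw [hM, Set.mem_setOf_eq] at hp
      -- population side
      have hdHH : dHH H ν ν' = 2 * ⨆ q, F q := rfl
      have hFstar : F pstar = |a - b| := rfl
      -- empirical side
      have hdemp : dHHemp H p.1 p.2 = 2 * ⨆ q : ↥H × ↥H,
          |(∑ i, if q.1.1 (p.1 i) ≠ q.2.1 (p.1 i) then (1 : ℝ) else 0) / m' -
            (∑ i, if q.1.1 (p.2 i) ≠ q.2.1 (p.2 i) then (1 : ℝ) else 0) / m'| := rfl
      have hle := le_ciSup (my_bdd_emp (H := H) hm p.1 p.2) pstar
      have hstar_emp : |(∑ i, if pstar.1.1 (p.1 i) ≠ pstar.2.1 (p.1 i) then (1 : ℝ) else 0) / m' -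
            (∑ i, if pstar.1.1 (p.2 i) ≠ pstar.2.1 (p.2 i) then (1 : ℝ) else 0) / m'|
          = |((∑ i, B.indicator (fun _ => (1 : ℝ)) (p.1 i)) / m'
              - (∑ i, B.indicator (fun _ => (1 : ℝ)) (p.2 i)) / m')| := by
        rw [hind_if p.1, hind_if p.2]
      -- |a - b| ≤ empirical + v
      have htri : |a - b| ≤ |((∑ i, B.indicator (fun _ => (1 : ℝ)) (p.1 i)) / m'
              - (∑ i, B.indicator (fun _ => (1 : ℝ)) (p.2 i)) / m')| + v := by
        have h1 : |a - b| - |((∑ i, B.indicator (fun _ => (1 : ℝ)) (p.1 i)) / m'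
              - (∑ i, B.indicator (fun _ => (1 : ℝ)) (p.2 i)) / m')|
            ≤ |(a - b) - (((∑ i, B.indicator (fun _ => (1 : ℝ)) (p.1 i)) / m'
              - (∑ i, B.indicator (fun _ => (1 : ℝ)) (p.2 i)) / m'))| :=
          abs_sub_abs_le_abs_sub _ _
        have h2 : |(a - b) - (((∑ i, B.indicator (fun _ => (1 : ℝ)) (p.1 i)) / m'
              - (∑ i, B.indicator (fun _ => (1 : ℝ)) (p.2 i)) / m'))|
            = |((∑ i, B.indicator (fun _ => (1 : ℝ)) (p.1 i)) / m'
              - (∑ i, B.indicator (fun _ => (1 : ℝ)) (p.2 i)) / m') - (a - b)| := abs_sub_comm _ _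
        rw [h2] at h1
        linarith
      have hchain : dHH H ν ν' ≤ 2 * F pstar + T / 4 := by
        rw [hdHH]
        have := hpstar
        linarith
      have hemp_ge : 2 * |((∑ i, B.indicator (fun _ => (1 : ℝ)) (p.1 i)) / m'
              - (∑ i, B.indicator (fun _ => (1 : ℝ)) (p.2 i)) / m')| ≤ dHHemp H p.1 p.2 := by
        rw [hdemp]
        rw [← hstar_emp]
        linarith [hle]
      rw [hFstar] at hchain
      have : 2 * |a - b| ≤ dHHemp H p.1 p.2 + 2 * v := by linarith [htri]
      calc dHH H ν ν' ≤ 2 * |a - b| + T / 4 := hchain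
        _ ≤ dHHemp H p.1 p.2 + 2 * v + T / 4 := by linarith
        _ = dHHemp H p.1 p.2 + T := by rw [hv]; ring
    · have hcompl : Mᶜ = {p : (Fin m' → Z) × (Fin m' → Z) |
          v < |((∑ i, B.indicator (fun _ => (1 : ℝ)) (p.1 i)) / m'
              - (∑ i, B.indicator (fun _ => (1 : ℝ)) (p.2 i)) / m') - (a - b)|} := by
        ext p
        simp only [hM, Set.mem_compl_iff, Set.mem_setOf_eq, not_le]
      rw [hcompl, hadef, hbdef]
      exact my_chernoff_pair m' hm ν ν' hB hv0 hv1

section det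
variable {Z : Type*} [MeasurableSpace Z]

lemma my_errE_const {μ : Measure Z} [IsProbabilityMeasure μ] {f : Z → ℝ} {c : ℝ}
    (hf : f =ᵐ[μ] fun _ => c) (h : Z → ℝ) :
    errE μ h f = ∫ z, |h z - c| ∂μ := by
  apply integral_congr_ae
  filter_upwards [hf] with z hz
  rw [hz]

lemma my_int_bin {μ : Measure Z} [IsProbabilityMeasure μ] {φ : Z → ℝ}
    (hφm : Measurable φ) {C : ℝ} (hC : ∀ z, |φ z| ≤ C) : Integrable φ μ :=
  my_integrable_of_bdd hφm hC

lemma my_pair_det {H : Set (Z → ℝ)}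
    (hbin : ∀ h ∈ H, ∀ z, h z = 0 ∨ h z = 1) (hmeas : ∀ h ∈ H, Measurable h)
    (ν ν' : Measure Z) [IsProbabilityMeasure ν] [IsProbabilityMeasure ν']
    {f : Z → ℝ} {c : ℝ} (hfν : f =ᵐ[ν] fun _ => c) (hfν' : f =ᵐ[ν'] fun _ => c)
    {gs : Z → ℝ} (hgs : gs ∈ H) {g : Z → ℝ} (hg : g ∈ H) :
    |errE ν g f - errE ν' g f| ≤ (1/2) * dHH H ν ν' + (errE ν' gs f + errE ν gs f) := by
  haveI : Nonempty ↥H := ⟨⟨g, hg⟩⟩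
  have hgm : Measurable g := hmeas g hg
  have hgsm : Measurable gs := hmeas gs hgs
  have hgb : ∀ z, |g z| ≤ 1 := by
    intro z; rcases hbin g hg z with h | h <;> rw [h] <;> norm_num
  have hgsb : ∀ z, |gs z| ≤ 1 := by
    intro z; rcases hbin gs hgs z with h | h <;> rw [h] <;> norm_num
  -- integrability
  have I1 : ∀ (μ : Measure Z) [IsProbabilityMeasure μ], Integrable (fun z => |g z - c|) μ := by
    intro μ _
    apply my_int_bin ((hgm.sub measurable_const).abs) (C := 1 + |c|)
    intro z
    rw [abs_abs]
    calc |g z - c| ≤ |g z| + |c| := abs_sub _ _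
      _ ≤ 1 + |c| := by linarith [hgb z]
  have I2 : ∀ (μ : Measure Z) [IsProbabilityMeasure μ], Integrable (fun z => |g z - gs z|) μ := by
    intro μ _
    apply my_int_bin ((hgm.sub hgsm).abs) (C := 2)
    intro z
    rw [abs_abs]
    calc |g z - gs z| ≤ |g z| + |gs z| := abs_sub _ _
      _ ≤ 2 := by linarith [hgb z, hgsb z]
  have I3 : ∀ (μ : Measure Z) [IsProbabilityMeasure μ], Integrable (fun z => |gs z - c|) μ := by
    intro μ _
    apply my_int_bin ((hgsm.sub measurable_const).abs) (C := 1 + |c|)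
    intro z
    rw [abs_abs]
    calc |gs z - c| ≤ |gs z| + |c| := abs_sub _ _
      _ ≤ 1 + |c| := by linarith [hgsb z]
  -- step 1: |errE μ g f - errE μ g gs| ≤ errE μ gs f   (for μ with f =ᵐ c)
  have step1 : ∀ (μ : Measure Z) [IsProbabilityMeasure μ], f =ᵐ[μ] (fun _ => c) →
      |errE μ g f - errE μ g gs| ≤ errE μ gs f := by
    intro μ _ hfμ
    rw [my_errE_const hfμ g, my_errE_const hfμ gs]
    have herr2 : errE μ g gs = ∫ z, |g z - gs z| ∂μ := rfl
    rw [herr2]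
    rw [← integral_sub (I1 μ) (I2 μ)]
    have habs : |∫ z, (|g z - c| - |g z - gs z|) ∂μ| ≤ ∫ z, |(|g z - c| - |g z - gs z|)| ∂μ := by
      simpa [Real.norm_eq_abs] using
        norm_integral_le_integral_norm (μ := μ) (fun z => (|g z - c| - |g z - gs z|))
    refine le_trans habs (integral_mono ?_ (I3 μ) ?_)
    · apply my_int_bin (((hgm.sub measurable_const).abs.sub (hgm.sub hgsm).abs).abs)
        (C := 3 + |c|)
      intro z
      rw [abs_abs]
      calc |(|g z - c| - |g z - gs z|)| ≤ |g z - c| + |g z - gs z| := by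
            simpa [abs_abs] using abs_sub (|g z - c|) (|g z - gs z|)
        _ ≤ (1 + |c|) + 2 := by
            have h1 : |g z - c| ≤ 1 + |c| := by
              calc |g z - c| ≤ |g z| + |c| := abs_sub _ _
                _ ≤ 1 + |c| := by linarith [hgb z]
            have h2 : |g z - gs z| ≤ 2 := by
              calc |g z - gs z| ≤ |g z| + |gs z| := abs_sub _ _
                _ ≤ 2 := by linarith [hgb z, hgsb z]
            linarith
        _ = 3 + |c| := by ring
    · intro z
      have h := abs_abs_sub_abs_le_abs_sub (g z - c) (g z - gs z)
      have heq : (g z - c) - (g z - gs z) = gs z - c := by ring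
      rw [heq] at h
      exact h
  -- step 2
  have hset : MeasurableSet {z | g z ≠ gs z} := (measurableSet_eq_fun hgm hgsm).compl
  have herr_set : ∀ (μ : Measure Z) [IsProbabilityMeasure μ],
      errE μ g gs = (μ {z | g z ≠ gs z}).toReal := by
    intro μ _
    have hpt : (fun z => |g z - gs z|)
        = fun z => Set.indicator {z | g z ≠ gs z} (fun _ => (1 : ℝ)) z := by
      funext z
      by_cases hz : g z = gs z
      · rw [Set.indicator_of_notMem (by simp [hz])]
        rw [hz]; simp
      · rw [Set.indicator_of_mem (show z ∈ {z | g z ≠ gs z} from hz)]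
        rcases hbin g hg z with h1 | h1 <;> rcases hbin gs hgs z with h2 | h2 <;>
          rw [h1, h2] at hz ⊢ <;> simp_all
    have : errE μ g gs = ∫ z, Set.indicator {z | g z ≠ gs z} (fun _ => (1 : ℝ)) z ∂μ := by
      show (∫ z, |g z - gs z| ∂μ) = _
      rw [hpt]
    rw [this, integral_indicator_const _ hset]
    simp
    rfl
  have step2 : |errE ν g gs - errE ν' g gs| ≤ (1/2) * dHH H ν ν' := by
    rw [herr_set ν, herr_set ν']
    have hidx := le_ciSup (my_bdd_pop ν ν' (H := H)) (⟨⟨g, hg⟩, ⟨gs, hgs⟩⟩ : ↥H × ↥H)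
    have hd : dHH H ν ν' = 2 * ⨆ p : ↥H × ↥H,
        |(ν {z | p.1.1 z ≠ p.2.1 z}).toReal - (ν' {z | p.1.1 z ≠ p.2.1 z}).toReal| := rfl
    rw [hd]
    have : |(ν {z | g z ≠ gs z}).toReal - (ν' {z | g z ≠ gs z}).toReal|
        ≤ ⨆ p : ↥H × ↥H,
          |(ν {z | p.1.1 z ≠ p.2.1 z}).toReal - (ν' {z | p.1.1 z ≠ p.2.1 z}).toReal| := hidx
    linarith
  have s1 := step1 ν hfν
  have s1' := step1 ν' hfν'
  calc |errE ν g f - errE ν' g f|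
      ≤ |errE ν g f - errE ν g gs| + |errE ν g gs - errE ν' g f| := abs_sub_le _ _ _
    _ ≤ |errE ν g f - errE ν g gs| + (|errE ν g gs - errE ν' g gs|
          + |errE ν' g gs - errE ν' g f|) := by
        linarith [abs_sub_le (errE ν g gs) (errE ν' g gs) (errE ν' g f)]
    _ ≤ errE ν gs f + ((1/2) * dHH H ν ν' + errE ν' gs f) := by
        have h3 : |errE ν' g gs - errE ν' g f| = |errE ν' g f - errE ν' g gs| := abs_sub_comm _ _
        rw [h3]
        linarith
    _ = (1/2) * dHH H ν ν' + (errE ν' gs f + errE ν gs f) := by ring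

lemma my_int0 {μ : Measure Z} [IsProbabilityMeasure μ] {H : Set (Z → ℝ)}
    (hbin : ∀ h ∈ H, ∀ z, h z = 0 ∨ h z = 1) {f : Z → ℝ}
    (hf : f =ᵐ[μ] fun _ => (0 : ℝ)) {g : Z → ℝ} (hg : g ∈ H) :
    ∫ z, g z ∂μ = errE μ g f := by
  rw [my_errE_const hf g]
  apply integral_congr_ae
  apply Filter.Eventually.of_forall
  intro z
  rcases hbin g hg z with h | h <;> norm_num [h]

lemma my_int1 {μ : Measure Z} [IsProbabilityMeasure μ] {H : Set (Z → ℝ)}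
    (hbin : ∀ h ∈ H, ∀ z, h z = 0 ∨ h z = 1) {f : Z → ℝ}
    (hf : f =ᵐ[μ] fun _ => (1 : ℝ)) {g : Z → ℝ} (hg : g ∈ H) :
    ∫ z, (1 - g z) ∂μ = errE μ g f := by
  rw [my_errE_const hf g]
  apply integral_congr_ae
  apply Filter.Eventually.of_forall
  intro z
  rcases hbin g hg z with h | h <;> norm_num [h]

end det

end myaux

theorem stmt11 {Z : Type*} [MeasurableSpace Z] (H : Set (Z → ℝ))
    (hbin : ∀ h ∈ H, ∀ z, h z = 0 ∨ h z = 1)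
    (hmeas : ∀ h ∈ H, Measurable h)
    (hsym : ∀ h ∈ H, (fun z => 1 - h z) ∈ H)
    (d m' : ℕ) (hm : 0 < m')
    (μS00 μS10 μS01 μS11 μT00 μT10 μT01 μT11 : Measure Z)
    [IsProbabilityMeasure μS00] [IsProbabilityMeasure μS10]
    [IsProbabilityMeasure μS01] [IsProbabilityMeasure μS11]
    [IsProbabilityMeasure μT00] [IsProbabilityMeasure μT10]
    [IsProbabilityMeasure μT01] [IsProbabilityMeasure μT11]
    (f : Z → ℝ)
    (hfS00 : f =ᵐ[μS00] fun _ => 0) (hfS10 : f =ᵐ[μS10] fun _ => 0)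
    (hfS01 : f =ᵐ[μS01] fun _ => 1) (hfS11 : f =ᵐ[μS11] fun _ => 1)
    (hfT00 : f =ᵐ[μT00] fun _ => 0) (hfT10 : f =ᵐ[μT10] fun _ => 0)
    (hfT01 : f =ᵐ[μT01] fun _ => 1) (hfT11 : f =ᵐ[μT11] fun _ => 1)
    -- ideal joint hypothesis `g*`
    (gs : Z → ℝ) (hgs : gs ∈ H)
    (δ : ℝ) (hδ : 0 < δ) (hδ1 : δ < 1)
    -- empirical divergence estimation lemma
    (hEmp : ∀ (ν ν' : Measure Z) [IsProbabilityMeasure ν] [IsProbabilityMeasure ν'],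
      ∀ δ' : ℝ, 0 < δ' →
      ENNReal.ofReal (1 - δ') ≤
        ((Measure.pi fun _ : Fin m' => ν).prod (Measure.pi fun _ : Fin m' => ν'))
          {p : (Fin m' → Z) × (Fin m' → Z) |
            dHH H ν ν' ≤ dHHemp H p.1 p.2 +
              8 * Real.sqrt ((2 * d * Real.log (2 * m') + Real.log (2 / δ')) / m')}) :
    ENNReal.ofReal (1 - δ) ≤
      ((((Measure.pi fun _ : Fin m' => μT00).prod (Measure.pi fun _ : Fin m' => μS00)).prod
          ((Measure.pi fun _ : Fin m' => μT10).prod (Measure.pi fun _ : Fin m' => μS10))).prod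
        (((Measure.pi fun _ : Fin m' => μT01).prod (Measure.pi fun _ : Fin m' => μS01)).prod
          ((Measure.pi fun _ : Fin m' => μT11).prod (Measure.pi fun _ : Fin m' => μS11))))
        {q : (((Fin m' → Z) × (Fin m' → Z)) × ((Fin m' → Z) × (Fin m' → Z))) ×
              (((Fin m' → Z) × (Fin m' → Z)) × ((Fin m' → Z) × (Fin m' → Z))) |
          ∀ g ∈ H,
            eoDiff μT00 μT10 μT01 μT11 g ≤
              eoDiff μS00 μS10 μS01 μS11 g +
                (1 / 2) * (dHHemp H q.1.1.1 q.1.1.2 + dHHemp H q.1.2.1 q.1.2.2 +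
                  dHHemp H q.2.1.1 q.2.1.2 + dHHemp H q.2.2.1 q.2.2.2) +
                16 * Real.sqrt ((2 * d * Real.log (2 * m') + Real.log (2 / δ)) / m') +
                ((errE μS00 gs f + errE μT00 gs f) + (errE μS10 gs f + errE μT10 gs f) +
                  (errE μS01 gs f + errE μT01 gs f) + (errE μS11 gs f + errE μT11 gs f))} := by
  set μbig := ((((Measure.pi fun _ : Fin m' => μT00).prod (Measure.pi fun _ : Fin m' => μS00)).prod
          ((Measure.pi fun _ : Fin m' => μT10).prod (Measure.pi fun _ : Fin m' => μS10))).prod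
        (((Measure.pi fun _ : Fin m' => μT01).prod (Measure.pi fun _ : Fin m' => μS01)).prod
          ((Measure.pi fun _ : Fin m' => μT11).prod (Measure.pi fun _ : Fin m' => μS11)))) with hμbig
  haveI : IsProbabilityMeasure μbig := by rw [hμbig]; infer_instance
  rcases Set.eq_empty_or_nonempty H with hHe | hHne
  · have huniv : {q : (((Fin m' → Z) × (Fin m' → Z)) × ((Fin m' → Z) × (Fin m' → Z))) ×
              (((Fin m' → Z) × (Fin m' → Z)) × ((Fin m' → Z) × (Fin m' → Z))) |
          ∀ g ∈ H,
            eoDiff μT00 μT10 μT01 μT11 g ≤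
              eoDiff μS00 μS10 μS01 μS11 g +
                (1 / 2) * (dHHemp H q.1.1.1 q.1.1.2 + dHHemp H q.1.2.1 q.1.2.2 +
                  dHHemp H q.2.1.1 q.2.1.2 + dHHemp H q.2.2.1 q.2.2.2) +
                16 * Real.sqrt ((2 * d * Real.log (2 * m') + Real.log (2 / δ)) / m') +
                ((errE μS00 gs f + errE μT00 gs f) + (errE μS10 gs f + errE μT10 gs f) +
                  (errE μS01 gs f + errE μT01 gs f) + (errE μS11 gs f + errE μT11 gs f))}
        = Set.univ := by
      ext q; simp [hHe]
    rw [huniv, measure_univ]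
    exact ENNReal.ofReal_le_one.2 (by linarith)
  · set A := 2 * (d : ℝ) * Real.log (2 * (m' : ℝ)) with hA
    set L := Real.log (2 / δ) with hL
    set T := 8 * Real.sqrt ((A + L) / m') with hT
    have hm0 : (0 : ℝ) < m' := by exact_mod_cast hm
    have hm1 : (1 : ℝ) ≤ m' := by exact_mod_cast hm
    have hlog2 : (0 : ℝ) < Real.log 2 := Real.log_pos (by norm_num)
    have hApos : 0 ≤ A := by
      rw [hA]
      apply mul_nonneg (mul_nonneg (by norm_num) (Nat.cast_nonneg d))
      apply Real.log_nonneg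
      linarith
    have hLge : Real.log 2 ≤ L := by
      rw [hL]
      apply Real.log_le_log (by norm_num)
      rw [le_div_iff₀ hδ]
      nlinarith
    have hLpos : 0 < L := lt_of_lt_of_le hlog2 hLge
    have hALm : 0 < (A + L) / m' := by positivity
    have hTpos : 0 < T := by
      rw [hT]
      have := Real.sqrt_pos.2 hALm
      linarith
    have hT2 : T ^ 2 = 64 * ((A + L) / m') := by
      rw [hT, mul_pow, Real.sq_sqrt hALm.le]
      norm_num
    obtain ⟨M1, hM1m, hM1p, hM1c⟩ := my_key_pair H hmeas hHne m' hm T hTpos μT00 μS00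
    obtain ⟨M2, hM2m, hM2p, hM2c⟩ := my_key_pair H hmeas hHne m' hm T hTpos μT10 μS10
    obtain ⟨M3, hM3m, hM3p, hM3c⟩ := my_key_pair H hmeas hHne m' hm T hTpos μT01 μS01
    obtain ⟨M4, hM4m, hM4p, hM4c⟩ := my_key_pair H hmeas hHne m' hm T hTpos μT11 μS11
    set N := (M1 ×ˢ M2) ×ˢ (M3 ×ˢ M4) with hN
    have hNmeas : MeasurableSet N := (hM1m.prod hM2m).prod (hM3m.prod hM4m)
    have hsqrtT : 16 * Real.sqrt ((A + L) / m') = 2 * T := by rw [hT]; ring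
    -- inclusion of the good event into the target event
    have hNsub : N ⊆ {q : (((Fin m' → Z) × (Fin m' → Z)) × ((Fin m' → Z) × (Fin m' → Z))) ×
              (((Fin m' → Z) × (Fin m' → Z)) × ((Fin m' → Z) × (Fin m' → Z))) |
          ∀ g ∈ H,
            eoDiff μT00 μT10 μT01 μT11 g ≤
              eoDiff μS00 μS10 μS01 μS11 g +
                (1 / 2) * (dHHemp H q.1.1.1 q.1.1.2 + dHHemp H q.1.2.1 q.1.2.2 +
                  dHHemp H q.2.1.1 q.2.1.2 + dHHemp H q.2.2.1 q.2.2.2) +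
                16 * Real.sqrt ((A + L) / m') +
                ((errE μS00 gs f + errE μT00 gs f) + (errE μS10 gs f + errE μT10 gs f) +
                  (errE μS01 gs f + errE μT01 gs f) + (errE μS11 gs f + errE μT11 gs f))} := by
      rintro q ⟨⟨hq1, hq2⟩, hq3, hq4⟩
      intro g hg
      have d1 := my_pair_det hbin hmeas μT00 μS00 hfT00 hfS00 hgs hg
      have d2 := my_pair_det hbin hmeas μT10 μS10 hfT10 hfS10 hgs hg
      have d3 := my_pair_det hbin hmeas μT01 μS01 hfT01 hfS01 hgs hg
      have d4 := my_pair_det hbin hmeas μT11 μS11 hfT11 hfS11 hgs hg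
      have b1 := hM1p _ hq1
      have b2 := hM2p _ hq2
      have b3 := hM3p _ hq3
      have b4 := hM4p _ hq4
      have e00 : ∫ z, g z ∂μT00 = errE μT00 g f := my_int0 hbin hfT00 hg
      have e10 : ∫ z, g z ∂μT10 = errE μT10 g f := my_int0 hbin hfT10 hg
      have eS00 : ∫ z, g z ∂μS00 = errE μS00 g f := my_int0 hbin hfS00 hg
      have eS10 : ∫ z, g z ∂μS10 = errE μS10 g f := my_int0 hbin hfS10 hg
      have e01 : ∫ z, (1 - g z) ∂μT01 = errE μT01 g f := my_int1 hbin hfT01 hg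
      have e11 : ∫ z, (1 - g z) ∂μT11 = errE μT11 g f := my_int1 hbin hfT11 hg
      have eS01 : ∫ z, (1 - g z) ∂μS01 = errE μS01 g f := my_int1 hbin hfS01 hg
      have eS11 : ∫ z, (1 - g z) ∂μS11 = errE μS11 g f := my_int1 hbin hfS11 hg
      have heoT : eoDiff μT00 μT10 μT01 μT11 g
          = |errE μT00 g f - errE μT10 g f| + |errE μT01 g f - errE μT11 g f| := by
        show |(∫ z, g z ∂μT00) - ∫ z, g z ∂μT10|
            + |(∫ z, (1 - g z) ∂μT01) - ∫ z, (1 - g z) ∂μT11| = _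
        rw [e00, e10, e01, e11]
      have heoS : eoDiff μS00 μS10 μS01 μS11 g
          = |errE μS00 g f - errE μS10 g f| + |errE μS01 g f - errE μS11 g f| := by
        show |(∫ z, g z ∂μS00) - ∫ z, g z ∂μS10|
            + |(∫ z, (1 - g z) ∂μS01) - ∫ z, (1 - g z) ∂μS11| = _
        rw [eS00, eS10, eS01, eS11]
      have tri1 : |errE μT00 g f - errE μT10 g f|
          ≤ |errE μS00 g f - errE μS10 g f|
            + |errE μT00 g f - errE μS00 g f| + |errE μT10 g f - errE μS10 g f| := by
        have h1 := abs_sub_le (errE μT00 g f) (errE μS00 g f) (errE μT10 g f)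
        have h2 := abs_sub_le (errE μS00 g f) (errE μS10 g f) (errE μT10 g f)
        have h3 : |errE μS10 g f - errE μT10 g f| = |errE μT10 g f - errE μS10 g f| :=
          abs_sub_comm _ _
        linarith
      have tri2 : |errE μT01 g f - errE μT11 g f|
          ≤ |errE μS01 g f - errE μS11 g f|
            + |errE μT01 g f - errE μS01 g f| + |errE μT11 g f - errE μS11 g f| := by
        have h1 := abs_sub_le (errE μT01 g f) (errE μS01 g f) (errE μT11 g f)
        have h2 := abs_sub_le (errE μS01 g f) (errE μS11 g f) (errE μT11 g f)
        have h3 : |errE μS11 g f - errE μT11 g f| = |errE μT11 g f - errE μS11 g f| :=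
          abs_sub_comm _ _
        linarith
      show eoDiff μT00 μT10 μT01 μT11 g ≤ _
      rw [heoT, heoS, hsqrtT]
      linarith
    -- probability of the bad event
    set Ebd := ENNReal.ofReal (2 * Real.exp (-((m' : ℝ) * (3 * T / 8) ^ 2 / 2))) with hEbd
    have hexp : (m' : ℝ) * (3 * T / 8) ^ 2 / 2 = 9 / 2 * (A + L) := by
      have : (3 * T / 8) ^ 2 = 9 / 64 * T ^ 2 := by ring
      rw [this, hT2]
      field_simp
    have hreal : 2 * Real.exp (-((m' : ℝ) * (3 * T / 8) ^ 2 / 2)) ≤ δ / 4 := by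
      rw [hexp]
      have hmono : Real.exp (-(9 / 2 * (A + L))) ≤ Real.exp (-(4 * L)) := by
        apply Real.exp_le_exp.2
        nlinarith
      have hexpL : Real.exp (-L) = δ / 2 := by
        rw [hL, Real.exp_neg, Real.exp_log (by positivity)]
        rw [inv_div]
      have h4L : Real.exp (-(4 * L)) = (δ / 2) ^ 4 := by
        have : -(4 * L) = (4 : ℕ) * (-L) := by push_cast; ring
        rw [this, Real.exp_nat_mul, hexpL]
      have hd4 : δ ^ 4 ≤ δ := pow_le_of_le_one hδ.le hδ1.le (by norm_num)
      have hpow : (δ / 2) ^ 4 ≤ δ / 16 := by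
        have hring : (δ / 2) ^ 4 = δ ^ 4 / 16 := by ring
        rw [hring]
        linarith
      calc 2 * Real.exp (-(9 / 2 * (A + L))) ≤ 2 * Real.exp (-(4 * L)) := by linarith [hmono]
        _ = 2 * (δ / 2) ^ 4 := by rw [h4L]
        _ ≤ 2 * (δ / 16) := by linarith
        _ ≤ δ / 4 := by linarith
    -- the four cylinder bad sets
    have hC1 : μbig ((M1ᶜ ×ˢ Set.univ) ×ˢ Set.univ) ≤ Ebd := by
      rw [hμbig, Measure.prod_prod, Measure.prod_prod, measure_univ, measure_univ,
        mul_one, mul_one]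
      exact hM1c
    have hC2 : μbig ((Set.univ ×ˢ M2ᶜ) ×ˢ Set.univ) ≤ Ebd := by
      rw [hμbig, Measure.prod_prod, Measure.prod_prod, measure_univ, measure_univ,
        mul_one, one_mul]
      exact hM2c
    have hC3 : μbig (Set.univ ×ˢ (M3ᶜ ×ˢ Set.univ)) ≤ Ebd := by
      rw [hμbig, Measure.prod_prod, Measure.prod_prod, measure_univ, measure_univ,
        mul_one, one_mul]
      exact hM3c
    have hC4 : μbig (Set.univ ×ˢ (Set.univ ×ˢ M4ᶜ)) ≤ Ebd := by
      rw [hμbig, Measure.prod_prod, Measure.prod_prod, measure_univ, measure_univ,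
        one_mul, one_mul]
      exact hM4c
    have hNc_sub : Nᶜ ⊆ ((M1ᶜ ×ˢ Set.univ) ×ˢ Set.univ) ∪ ((Set.univ ×ˢ M2ᶜ) ×ˢ Set.univ)
        ∪ (Set.univ ×ˢ (M3ᶜ ×ˢ Set.univ)) ∪ (Set.univ ×ˢ (Set.univ ×ˢ M4ᶜ)) := by
      intro q hq
      rw [hN, Set.mem_compl_iff] at hq
      by_cases h1 : q.1.1 ∈ M1
      · by_cases h2 : q.1.2 ∈ M2
        · by_cases h3 : q.2.1 ∈ M3
          · by_cases h4 : q.2.2 ∈ M4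
            · exact absurd ⟨⟨h1, h2⟩, h3, h4⟩ hq
            · right
              exact ⟨Set.mem_univ _, Set.mem_univ _, h4⟩
          · left; right
            exact ⟨Set.mem_univ _, h3, Set.mem_univ _⟩
        · left; left; right
          exact ⟨⟨Set.mem_univ _, h2⟩, Set.mem_univ _⟩
      · left; left; left
        exact ⟨⟨h1, Set.mem_univ _⟩, Set.mem_univ _⟩
    have hNc_le : μbig Nᶜ ≤ ENNReal.ofReal δ := by
      calc μbig Nᶜ ≤ μbig (((M1ᶜ ×ˢ Set.univ) ×ˢ Set.univ) ∪ ((Set.univ ×ˢ M2ᶜ) ×ˢ Set.univ)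
          ∪ (Set.univ ×ˢ (M3ᶜ ×ˢ Set.univ)) ∪ (Set.univ ×ˢ (Set.univ ×ˢ M4ᶜ))) :=
            measure_mono hNc_sub
        _ ≤ μbig (((M1ᶜ ×ˢ Set.univ) ×ˢ Set.univ) ∪ ((Set.univ ×ˢ M2ᶜ) ×ˢ Set.univ)
          ∪ (Set.univ ×ˢ (M3ᶜ ×ˢ Set.univ))) + μbig (Set.univ ×ˢ (Set.univ ×ˢ M4ᶜ)) :=
            measure_union_le _ _
        _ ≤ (μbig (((M1ᶜ ×ˢ Set.univ) ×ˢ Set.univ) ∪ ((Set.univ ×ˢ M2ᶜ) ×ˢ Set.univ))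
            + μbig (Set.univ ×ˢ (M3ᶜ ×ˢ Set.univ))) + μbig (Set.univ ×ˢ (Set.univ ×ˢ M4ᶜ)) := by
            gcongr
            exact measure_union_le _ _
        _ ≤ ((μbig ((M1ᶜ ×ˢ Set.univ) ×ˢ Set.univ) + μbig ((Set.univ ×ˢ M2ᶜ) ×ˢ Set.univ))
            + μbig (Set.univ ×ˢ (M3ᶜ ×ˢ Set.univ))) + μbig (Set.univ ×ˢ (Set.univ ×ˢ M4ᶜ)) := by
            gcongr
            exact measure_union_le _ _
        _ ≤ ((Ebd + Ebd) + Ebd) + Ebd := by gcongr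
        _ = ENNReal.ofReal (2 * Real.exp (-((m' : ℝ) * (3 * T / 8) ^ 2 / 2)) * 4) := by
            rw [hEbd, ← ENNReal.ofReal_add (by positivity) (by positivity),
              ← ENNReal.ofReal_add (by positivity) (by positivity),
              ← ENNReal.ofReal_add (by positivity) (by positivity)]
            congr 1
            ring
        _ ≤ ENNReal.ofReal δ := by
            apply ENNReal.ofReal_le_ofReal
            nlinarith [hreal]
    have hNge : ENNReal.ofReal (1 - δ) ≤ μbig N := by
      have hsum : μbig N + μbig Nᶜ = 1 := by
        rw [measure_add_measure_compl hNmeas, measure_univ]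
      have hEq : μbig N = 1 - μbig Nᶜ :=
        ENNReal.eq_sub_of_add_eq (measure_ne_top _ _) hsum
      have h1 : ENNReal.ofReal (1 - δ) = 1 - ENNReal.ofReal δ := by
        rw [ENNReal.ofReal_sub 1 hδ.le, ENNReal.ofReal_one]
      rw [h1, hEq]
      exact tsub_le_tsub_left hNc_le 1
    exact le_trans hNge (measure_mono hNsub)
end

section
/- The population version of the equal opportunity transfer bound: for any g in a symmetric hypothesis space H and any g* ∈ H, Δ_{EOp,T}(g) − Δ_{EOp,S}(g) ≤ (1/2)d_{HΔH}(D_{T_0^0}, D_{S_0^0}) + (1/2)d_{HΔH}(D_{T_1^0}, D_{S_1^0}) + ε_{S_0^0}(g*,f) + ε_{T_0^0}(g*,f) + ε_{S_1^0}(g*,f) + ε_{T_1^0}(g*,f). In particular, when f ≡ 0 on all four distributions and g* ≡ 0 is in H, Δ_{EOp,T}(g) ≤ Δ_{EOp,S}(g) + (1/2)d_{HΔH}(D_{T_0^0}, D_{S_0^0}) + (1/2)d_{HΔH}(D_{T_1^0}, D_{S_1^0}). -/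
open MeasureTheory

lemma bin_integrable {Z : Type*} [MeasurableSpace Z] (μ : Measure Z) [IsProbabilityMeasure μ]
    (h : Z → ℝ) (hm : Measurable h) (hb : ∀ z, h z = 0 ∨ h z = 1) : Integrable h μ := by
  refine (integrable_const (1:ℝ)).mono' hm.aestronglyMeasurable ?_
  filter_upwards with z
  rcases hb z with h0 | h0 <;> simp [h0]

lemma abs_sub_integral {Z : Type*} [MeasurableSpace Z] (μ : Measure Z)
    (g gs : Z → ℝ) (hgm : Measurable g) (hgsm : Measurable gs)
    (hgb : ∀ z, g z = 0 ∨ g z = 1) (hgsb : ∀ z, gs z = 0 ∨ gs z = 1) :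
    ∫ z, |g z - gs z| ∂μ = (μ {z | g z ≠ gs z}).toReal := by
  have hA : MeasurableSet {z | g z ≠ gs z} := by
    have h1 : MeasurableSet {z | g z = gs z} := measurableSet_eq_fun hgm hgsm
    have : {z | g z ≠ gs z} = {z | g z = gs z}ᶜ := rfl
    rw [this]; exact h1.compl
  have heq : (fun z => |g z - gs z|) =
      Set.indicator {z | g z ≠ gs z} (fun _ => (1:ℝ)) := by
    funext z
    by_cases h : g z = gs z
    · simp [Set.indicator_of_notMem, h]
    · have : z ∈ {z | g z ≠ gs z} := h
      rw [Set.indicator_of_mem this]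
      rcases hgb z with h0|h1 <;> rcases hgsb z with hs0|hs1 <;> simp_all
  rw [heq, integral_indicator hA]
  simp
  rfl

lemma key_bound {Z : Type*} [MeasurableSpace Z] (H : Set (Z → ℝ))
    (hbin : ∀ h ∈ H, ∀ z, h z = 0 ∨ h z = 1)
    (hmeas : ∀ h ∈ H, Measurable h)
    (μ ν : Measure Z) [IsProbabilityMeasure μ] [IsProbabilityMeasure ν]
    (g gs : Z → ℝ) (hg : g ∈ H) (hgs : gs ∈ H) :
    |(∫ z, g z ∂μ) - ∫ z, g z ∂ν| ≤
      (1 / 2) * dHH H μ ν + (∫ z, gs z ∂μ) + ∫ z, gs z ∂ν := by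
  set A := {z | g z ≠ gs z} with hAdef
  have hgm := hmeas g hg
  have hgsm := hmeas gs hgs
  have hgb := hbin g hg
  have hgsb := hbin gs hgs
  -- sup bound
  haveI : Nonempty (H × H) := ⟨⟨⟨g, hg⟩, ⟨gs, hgs⟩⟩⟩
  have hbdd : BddAbove (Set.range fun p : H × H =>
      |(μ {z | p.1.1 z ≠ p.2.1 z}).toReal - (ν {z | p.1.1 z ≠ p.2.1 z}).toReal|) := by
    refine ⟨1, ?_⟩
    rintro x ⟨p, rfl⟩
    have h1 : (μ {z | p.1.1 z ≠ p.2.1 z}).toReal ≤ 1 := by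
      have := prob_le_one (μ := μ) (s := {z | p.1.1 z ≠ p.2.1 z})
      simpa using ENNReal.toReal_le_of_le_ofReal (by norm_num) (by simpa using this)
    have h2 : (ν {z | p.1.1 z ≠ p.2.1 z}).toReal ≤ 1 := by
      have := prob_le_one (μ := ν) (s := {z | p.1.1 z ≠ p.2.1 z})
      simpa using ENNReal.toReal_le_of_le_ofReal (by norm_num) (by simpa using this)
    have h3 : 0 ≤ (μ {z | p.1.1 z ≠ p.2.1 z}).toReal := ENNReal.toReal_nonneg
    have h4 : 0 ≤ (ν {z | p.1.1 z ≠ p.2.1 z}).toReal := ENNReal.toReal_nonneg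
    rw [abs_sub_le_iff]; constructor <;> linarith
  have hsup : |(μ A).toReal - (ν A).toReal| ≤ (1 / 2) * dHH H μ ν := by
    have := le_ciSup hbdd (⟨⟨g, hg⟩, ⟨gs, hgs⟩⟩ : H × H)
    rw [dHH]; linarith
  -- integral identities and inequalities
  have hig := bin_integrable μ g hgm hgb
  have higs := bin_integrable μ gs hgsm hgsb
  have hig' := bin_integrable ν g hgm hgb
  have higs' := bin_integrable ν gs hgsm hgsb
  have hiA : Integrable (fun z => |g z - gs z|) μ := (hig.sub higs).abs
  have hiA' : Integrable (fun z => |g z - gs z|) ν := (hig'.sub higs').abs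
  have hmuA : ∫ z, |g z - gs z| ∂μ = (μ A).toReal :=
    abs_sub_integral μ g gs hgm hgsm hgb hgsb
  have hnuA : ∫ z, |g z - gs z| ∂ν = (ν A).toReal :=
    abs_sub_integral ν g gs hgm hgsm hgb hgsb
  have hptle : ∀ z, g z ≤ |g z - gs z| + gs z := by
    intro z
    have : g z - gs z ≤ |g z - gs z| := le_abs_self _
    linarith
  have hptge : ∀ z, |g z - gs z| ≤ g z + gs z := by
    intro z
    rcases hgb z with h0|h0 <;> rcases hgsb z with h1|h1 <;> rw [h0, h1] <;> norm_num
  have e1 : ∫ z, g z ∂μ ≤ (μ A).toReal + ∫ z, gs z ∂μ := by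
    have := integral_mono hig (hiA.add higs) hptle
    simp only [Pi.add_apply] at this
    rw [integral_add hiA higs] at this; linarith [hmuA ▸ this]
  have e1' : ∫ z, g z ∂ν ≤ (ν A).toReal + ∫ z, gs z ∂ν := by
    have := integral_mono hig' (hiA'.add higs') hptle
    simp only [Pi.add_apply] at this
    rw [integral_add hiA' higs'] at this; linarith [hnuA ▸ this]
  have e2 : (ν A).toReal - ∫ z, gs z ∂ν ≤ ∫ z, g z ∂ν := by
    have := integral_mono hiA' (hig'.add higs') hptge
    simp only [Pi.add_apply] at this
    rw [integral_add hig' higs'] at this; linarith [hnuA ▸ this]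
  have e2' : (μ A).toReal - ∫ z, gs z ∂μ ≤ ∫ z, g z ∂μ := by
    have := integral_mono hiA (hig.add higs) hptge
    simp only [Pi.add_apply] at this
    rw [integral_add hig higs] at this; linarith [hmuA ▸ this]
  have habs1 : (μ A).toReal - (ν A).toReal ≤ |(μ A).toReal - (ν A).toReal| := le_abs_self _
  have habs2 : (ν A).toReal - (μ A).toReal ≤ |(μ A).toReal - (ν A).toReal| := by
    rw [abs_sub_comm]; exact le_abs_self _
  rw [abs_sub_le_iff]; constructor <;> linarith

theorem stmt15 {Z : Type*} [MeasurableSpace Z] (H : Set (Z → ℝ))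
    (hbin : ∀ h ∈ H, ∀ z, h z = 0 ∨ h z = 1)
    (hmeas : ∀ h ∈ H, Measurable h)
    (hsym : ∀ h ∈ H, (fun z => 1 - h z) ∈ H)
    (μS0 μS1 μT0 μT1 : Measure Z)
    [IsProbabilityMeasure μS0] [IsProbabilityMeasure μS1]
    [IsProbabilityMeasure μT0] [IsProbabilityMeasure μT1]
    (f : Z → ℝ)
    (hfS0 : f =ᵐ[μS0] fun _ => 0) (hfS1 : f =ᵐ[μS1] fun _ => 0)
    (hfT0 : f =ᵐ[μT0] fun _ => 0) (hfT1 : f =ᵐ[μT1] fun _ => 0)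
    (g : Z → ℝ) (hg : g ∈ H) :
    (∀ gs ∈ H,
      eopDiff μT0 μT1 g - eopDiff μS0 μS1 g ≤
        (1 / 2) * dHH H μT0 μS0 + (1 / 2) * dHH H μT1 μS1 +
          errE μS0 gs f + errE μT0 gs f + errE μS1 gs f + errE μT1 gs f) ∧
    ((fun _ : Z => (0 : ℝ)) ∈ H →
      eopDiff μT0 μT1 g ≤
        eopDiff μS0 μS1 g + (1 / 2) * dHH H μT0 μS0 + (1 / 2) * dHH H μT1 μS1) := by
  have main : ∀ gs ∈ H,
      eopDiff μT0 μT1 g - eopDiff μS0 μS1 g ≤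
        (1 / 2) * dHH H μT0 μS0 + (1 / 2) * dHH H μT1 μS1 +
          errE μS0 gs f + errE μT0 gs f + errE μS1 gs f + errE μT1 gs f := by
    intro gs hgs
    have hgsb := hbin gs hgs
    have herr : ∀ (μ : Measure Z), f =ᵐ[μ] (fun _ => 0) →
        errE μ gs f = ∫ z, gs z ∂μ := by
      intro μ hf
      rw [errE]
      apply integral_congr_ae
      filter_upwards [hf] with z hz
      rw [hz]
      rcases hgsb z with h0 | h0 <;> rw [h0] <;> norm_num
    have k0 := key_bound H hbin hmeas μT0 μS0 g gs hg hgs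
    have k1 := key_bound H hbin hmeas μT1 μS1 g gs hg hgs
    rw [herr μS0 hfS0, herr μS1 hfS1, herr μT0 hfT0, herr μT1 hfT1]
    rw [eopDiff, eopDiff]
    set a := ∫ z, g z ∂μT0
    set b := ∫ z, g z ∂μT1
    set c := ∫ z, g z ∂μS0
    set d := ∫ z, g z ∂μS1
    have h1 : |a - b| - |c - d| ≤ |(a - b) - (c - d)| := by
      have := abs_sub_abs_le_abs_sub (a - b) (c - d); linarith
    have h2 : |(a - b) - (c - d)| ≤ |a - c| + |b - d| := by
      have h3 : (a - b) - (c - d) = (a - c) - (b - d) := by ring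
      rw [h3]; exact abs_sub _ _
    linarith
  refine ⟨main, fun h0 => ?_⟩
  have := main (fun _ => 0) h0
  have hz : ∀ (μ : Measure Z), f =ᵐ[μ] (fun _ => 0) →
      errE μ (fun _ => (0:ℝ)) f = 0 := by
    intro μ hf
    rw [errE]
    have : (fun z => |(0:ℝ) - f z|) =ᵐ[μ] (fun _ => (0:ℝ)) := by
      filter_upwards [hf] with z hzz; rw [hzz]; norm_num
    rw [integral_congr_ae this, integral_zero]
  rw [hz μS0 hfS0, hz μS1 hfS1, hz μT0 hfT0, hz μT1 hfT1] at this
  linarith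
end
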